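/- arXiv:1609.04616 — 2 statements merged into one kernel-verified Lean document; each statement's English description precedes it below -/
import Mathlib

section
/- Let q ≥ 1 be an integer and let (s_j)_{j=0}^∞ be a Stieltjes positive definite sequence of complex q×q matrices with Stieltjes parametrization (𝔮_j)_{j=0}^∞ and Dyukarev–Stieltjes parameters [(𝔏_k)_{k=0}^∞, (𝔐_k)_{k=0}^∞]. Then for every m ∈ ℕ₀: ∏_{j=0}^{m} 𝔮_{2j}^{−1} 𝔮_{2j+1} = (∏_{j=0}^{m} 𝔐_j 𝔏_j)^{−1} and ∏_{j=0}^{m} 𝔮_{2j} 𝔮_{2j+1}^{−1} = (∏_{j=0}^{m} 𝔐_j 𝔏_j)^*. -/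
open Matrix
open scoped ComplexOrder

noncomputable section

/-- The space of complex `q × q` matrices. -/
abbrev Mq (q : ℕ) := Matrix (Fin q) (Fin q) ℂ

/-- The space of complex `2q × 2q` matrices, written in `q × q` blocks. -/
abbrev M2q (q : ℕ) := Matrix (Fin q ⊕ Fin q) (Fin q ⊕ Fin q) ℂ

/-- Block Hankel matrix `H_n = (s_{j+k})_{j,k=0}^n`. -/
def Hmat (q : ℕ) (s : ℕ → Mq q) (n : ℕ) :
    Matrix (Fin (n + 1) × Fin q) (Fin (n + 1) × Fin q) ℂ :=
  Matrix.of fun p r => s (p.1.1 + r.1.1) p.2 r.2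

/-- Block Hankel matrix `K_n = (s_{j+k+1})_{j,k=0}^n`. -/
def Kmat (q : ℕ) (s : ℕ → Mq q) (n : ℕ) :
    Matrix (Fin (n + 1) × Fin q) (Fin (n + 1) × Fin q) ℂ :=
  Matrix.of fun p r => s (p.1.1 + r.1.1 + 1) p.2 r.2

/-- A sequence of complex `q × q` matrices is Stieltjes positive definite if all the
block Hankel matrices `H_n` and `K_n` are positive definite (in particular Hermitian). -/
def IsStieltjesPD (q : ℕ) (s : ℕ → Mq q) : Prop :=
  ∀ n : ℕ, (Hmat q s n).PosDef ∧ (Kmat q s n).PosDef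

/-- Even Stieltjes parameters `𝔮_{2k}` (Schur complements `L_k`). -/
def qEven (q : ℕ) (s : ℕ → Mq q) : ℕ → Mq q
  | 0 => s 0
  | k + 1 =>
      s (2 * (k + 1)) -
        (Matrix.of fun (a : Fin q) (r : Fin (k + 1) × Fin q) => s (k + 1 + r.1.1) a r.2) *
          (Hmat q s k)⁻¹ *
          (Matrix.of fun (p : Fin (k + 1) × Fin q) (b : Fin q) => s (k + 1 + p.1.1) p.2 b)

/-- Odd Stieltjes parameters `𝔮_{2k+1}` (Schur complements `Λ_k`). -/
def qOdd (q : ℕ) (s : ℕ → Mq q) : ℕ → Mq q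
  | 0 => s 1
  | k + 1 =>
      s (2 * (k + 1) + 1) -
        (Matrix.of fun (a : Fin q) (r : Fin (k + 1) × Fin q) => s (k + 2 + r.1.1) a r.2) *
          (Kmat q s k)⁻¹ *
          (Matrix.of fun (p : Fin (k + 1) × Fin q) (b : Fin q) => s (k + 2 + p.1.1) p.2 b)

/-- Stieltjes parametrization `𝔮_j`. -/
def qpar (q : ℕ) (s : ℕ → Mq q) (j : ℕ) : Mq q :=
  if j % 2 = 0 then qEven q s (j / 2) else qOdd q s (j / 2)

/-- Reciprocal sequence `s^♯`. -/
def reciprocal (q : ℕ) (s : ℕ → Mq q) : ℕ → Mq q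
  | 0 => (s 0)⁻¹
  | j + 1 =>
      -(s 0)⁻¹ *
        ∑ l ∈ (Finset.range (j + 1)).attach, s (j + 1 - l.1) * reciprocal q s l.1
  decreasing_by exact Finset.mem_range.mp l.2

/-- First Kátětov transform `s^{(1)}_j = −s_0 s_{j+1}^♯ s_0`. -/
def katetov1 (q : ℕ) (s : ℕ → Mq q) : ℕ → Mq q :=
  fun j => -(s 0) * reciprocal q s (j + 1) * s 0

/-- `ℓ`-th Kátětov transform (the `ℓ`-fold iterate of the first Kátětov transform). -/
def katetov (q : ℕ) (ℓ : ℕ) (s : ℕ → Mq q) : ℕ → Mq q :=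
  (katetov1 q)^[ℓ] s

/-- `v_k = col(I_q, 0_{kq×q})`. -/
def vcol (q k : ℕ) : Matrix (Fin (k + 1) × Fin q) (Fin q) ℂ :=
  Matrix.of fun p b => if p.1.1 = 0 ∧ p.2 = b then 1 else 0

/-- `y_{0,k} = col(s_0, …, s_k)`. -/
def ycol (q : ℕ) (s : ℕ → Mq q) (k : ℕ) : Matrix (Fin (k + 1) × Fin q) (Fin q) ℂ :=
  Matrix.of fun p b => s p.1.1 p.2 b

/-- Dyukarev–Stieltjes parameters `𝔐_k`. -/
def DSM (q : ℕ) (s : ℕ → Mq q) : ℕ → Mq q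
  | 0 => (s 0)⁻¹
  | k + 1 =>
      (vcol q (k + 1))ᴴ * (Hmat q s (k + 1))⁻¹ * vcol q (k + 1) -
        (vcol q k)ᴴ * (Hmat q s k)⁻¹ * vcol q k

/-- Dyukarev–Stieltjes parameters `𝔏_k`. -/
def DSL (q : ℕ) (s : ℕ → Mq q) : ℕ → Mq q
  | 0 => s 0 * (s 1)⁻¹ * s 0
  | k + 1 =>
      (ycol q s (k + 1))ᴴ * (Kmat q s (k + 1))⁻¹ * ycol q s (k + 1) -
        (ycol q s k)ᴴ * (Kmat q s k)⁻¹ * ycol q s k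

/-- Ordered product `A_0 A_1 ⋯ A_n`. -/
def oprod {α : Type*} [Monoid α] (f : ℕ → α) (n : ℕ) : α :=
  ((List.range (n + 1)).map f).prod

/-- Block shift `T_n = (δ_{j,k+1} I_q)_{j,k=0}^n`. -/
def Tmat (q n : ℕ) : Matrix (Fin (n + 1) × Fin q) (Fin (n + 1) × Fin q) ℂ :=
  Matrix.of fun p r => if p.1.1 = r.1.1 + 1 ∧ p.2 = r.2 then 1 else 0

/-- `R_n(z) = (I_{(n+1)q} − z T_n)⁻¹`. -/
def Rmat (q n : ℕ) (z : ℂ) : Matrix (Fin (n + 1) × Fin q) (Fin (n + 1) × Fin q) ℂ :=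
  (1 - z • Tmat q n)⁻¹

/-- `u_0 = 0`, `u_n = col(0_{q×q}, −y_{0,n−1})`. -/
def ucol (q : ℕ) (s : ℕ → Mq q) (n : ℕ) : Matrix (Fin (n + 1) × Fin q) (Fin q) ℂ :=
  Matrix.of fun p b => if p.1.1 = 0 then 0 else -(s (p.1.1 - 1) p.2 b)

/-- `col(−H_n⁻¹ y_{n+1,2n+1}, I_q)` of size `(n+2)q × q`. -/
def colH (q : ℕ) (s : ℕ → Mq q) (n : ℕ) : Matrix (Fin (n + 2) × Fin q) (Fin q) ℂ :=
  Matrix.of fun p b =>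
    if h : p.1.1 < n + 1 then
      (-((Hmat q s n)⁻¹ *
          Matrix.of fun (r : Fin (n + 1) × Fin q) (c : Fin q) => s (n + 1 + r.1.1) r.2 c))
        (⟨p.1.1, h⟩, p.2) b
    else if p.2 = b then 1 else 0

/-- `col(−K_n⁻¹ y_{n+2,2n+2}, I_q)` of size `(n+2)q × q`. -/
def colK (q : ℕ) (s : ℕ → Mq q) (n : ℕ) : Matrix (Fin (n + 2) × Fin q) (Fin q) ℂ :=
  Matrix.of fun p b =>
    if h : p.1.1 < n + 1 then
      (-((Kmat q s n)⁻¹ *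
          Matrix.of fun (r : Fin (n + 1) × Fin q) (c : Fin q) => s (n + 2 + r.1.1) r.2 c))
        (⟨p.1.1, h⟩, p.2) b
    else if p.2 = b then 1 else 0

/-- `z_{0,n} = row(s_0, …, s_n)`. -/
def zrow (q : ℕ) (s : ℕ → Mq q) (n : ℕ) : Matrix (Fin q) (Fin (n + 1) × Fin q) ℂ :=
  Matrix.of fun a r => s r.1.1 a r.2

/-- Orthogonal matrix polynomials `P_n`. -/
def Ppoly (q : ℕ) (s : ℕ → Mq q) : ℕ → ℂ → Mq q
  | 0, _ => 1
  | n + 1, z => (vcol q (n + 1))ᴴ * (Rmat q (n + 1) (starRingEnd ℂ z))ᴴ * colH q s n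

/-- Second kind matrix polynomials `Q_n`. -/
def Qpoly (q : ℕ) (s : ℕ → Mq q) : ℕ → ℂ → Mq q
  | 0, _ => 0
  | n + 1, z => -((ucol q s (n + 1))ᴴ * (Rmat q (n + 1) (starRingEnd ℂ z))ᴴ * colH q s n)

/-- Matrix polynomials `P̂_n`. -/
def Phat (q : ℕ) (s : ℕ → Mq q) : ℕ → ℂ → Mq q
  | 0, _ => 1
  | n + 1, z => (vcol q (n + 1))ᴴ * (Rmat q (n + 1) (starRingEnd ℂ z))ᴴ * colK q s n

/-- Matrix polynomials `Q̂_n`. -/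
def Qhat (q : ℕ) (s : ℕ → Mq q) : ℕ → ℂ → Mq q
  | 0, _ => s 0
  | n + 1, z => zrow q s (n + 1) * (Rmat q (n + 1) (starRingEnd ℂ z))ᴴ * colK q s n

/-- `α_n(z)`. -/
def alphaP (q : ℕ) (s : ℕ → Mq q) (n : ℕ) (z : ℂ) : Mq q :=
  1 - z • ((ucol q s n)ᴴ * (Rmat q n (starRingEnd ℂ z))ᴴ * (Hmat q s n)⁻¹ * vcol q n)

/-- `γ_n(z)`. -/
def gammaP (q : ℕ) (s : ℕ → Mq q) (n : ℕ) (z : ℂ) : Mq q :=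
  -(z • ((vcol q n)ᴴ * (Rmat q n (starRingEnd ℂ z))ᴴ * (Hmat q s n)⁻¹ * vcol q n))

/-- `β_n(z)`. -/
def betaP (q : ℕ) (s : ℕ → Mq q) : ℕ → ℂ → Mq q
  | 0, _ => 0
  | n + 1, z => (ycol q s n)ᴴ * (Rmat q n (starRingEnd ℂ z))ᴴ * (Kmat q s n)⁻¹ * ycol q s n

/-- `δ_n(z)`. -/
def deltaP (q : ℕ) (s : ℕ → Mq q) : ℕ → ℂ → Mq q
  | 0, _ => 1
  | n + 1, z =>
      1 + z • ((vcol q n)ᴴ * (Rmat q n (starRingEnd ℂ z))ᴴ * (Kmat q s n)⁻¹ * ycol q s n)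

/-- The resolvent matrices `U_m(z)`. -/
def Umat (q : ℕ) (s : ℕ → Mq q) (m : ℕ) (z : ℂ) : M2q q :=
  if m % 2 = 0 then
    Matrix.fromBlocks (alphaP q s (m / 2) z) (betaP q s (m / 2) z)
      (gammaP q s (m / 2) z) (deltaP q s (m / 2) z)
  else
    Matrix.fromBlocks (alphaP q s (m / 2) z) (betaP q s (m / 2 + 1) z)
      (gammaP q s (m / 2) z) (deltaP q s (m / 2 + 1) z)

/-- `𝕄_k(z) = [[I, 0], [−z𝔐_k, I]]`. -/
def MM (q : ℕ) (s : ℕ → Mq q) (k : ℕ) (z : ℂ) : M2q q :=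
  Matrix.fromBlocks 1 0 (-(z • DSM q s k)) 1

/-- `𝕃_k = [[I, 𝔏_k], [0, I]]`. -/
def LL (q : ℕ) (s : ℕ → Mq q) (k : ℕ) : M2q q :=
  Matrix.fromBlocks 1 (DSL q s k) 0 1

/-- `𝒫_n = diag([P_n(0)]^{−*}, P_n(0))`. -/
def PPmat (q : ℕ) (s : ℕ → Mq q) (n : ℕ) : M2q q :=
  Matrix.fromBlocks (((Ppoly q s n 0)⁻¹)ᴴ) 0 0 (Ppoly q s n 0)

/-- `𝐐_n(z) = [[0, Q̂_n(0)], [−z[Q̂_n(0)]^{−*}, 0]]`. -/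
def QQgen (q : ℕ) (s : ℕ → Mq q) (n : ℕ) (z : ℂ) : M2q q :=
  Matrix.fromBlocks 0 (Qhat q s n 0) (-(z • ((Qhat q s n 0)⁻¹)ᴴ)) 0

/-- `𝐐_0^{(ℓ)}(z) = [[0, s_0^{(ℓ)}], [−z(s_0^{(ℓ)})⁻¹, 0]]`. -/
def QQ0 (q : ℕ) (s : ℕ → Mq q) (ℓ : ℕ) (z : ℂ) : M2q q :=
  Matrix.fromBlocks 0 (katetov q ℓ s 0) (-(z • (katetov q ℓ s 0)⁻¹)) 0

/-- `𝒬_m(z) = 𝐐_0^{(0)}(z) ⋯ 𝐐_0^{(m)}(z)`. -/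
def Qprod (q : ℕ) (s : ℕ → Mq q) (m : ℕ) (z : ℂ) : M2q q :=
  oprod (fun ℓ => QQ0 q s ℓ z) m

namespace StmtAux

open Matrix

/-! ### Generic matrix helper lemmas -/

lemma mul_oneSub {l m n : Type*} [Fintype m] [DecidableEq m]
    (M : Matrix l m ℂ) (f : n → m) :
    M * (1 : Matrix m m ℂ).submatrix id f = M.submatrix id f := by
  ext i j
  simp [Matrix.mul_apply, Matrix.one_apply, mul_ite]

lemma oneSub_mul {l m n : Type*} [Fintype m] [DecidableEq m]
    (f : n → m) (M : Matrix m l ℂ) :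
    (1 : Matrix m m ℂ).submatrix f id * M = M.submatrix f id := by
  ext i j
  simp [Matrix.mul_apply, Matrix.one_apply, ite_mul]

lemma submatrix_inv {m n : Type*} [Fintype m] [DecidableEq m] [Fintype n] [DecidableEq n]
    (M : Matrix n n ℂ) (hM : IsUnit M.det) (e : m ≃ n) :
    (M⁻¹).submatrix e e = (M.submatrix e e)⁻¹ := by
  symm
  apply Matrix.inv_eq_right_inv
  rw [Matrix.submatrix_mul_equiv, Matrix.mul_nonsing_inv _ hM, Matrix.submatrix_one_equiv]

lemma posDef_submatrix_equiv {m n : Type*} [Fintype m] [Fintype n]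
    {M : Matrix n n ℂ} (hM : M.PosDef) (e : m ≃ n) :
    (M.submatrix e e).PosDef := by
  exact hM.submatrix e.injective

lemma posDef_of_posSemidef {n : Type*} [Fintype n] [DecidableEq n]
    {M : Matrix n n ℂ} (h1 : M.PosSemidef) (h2 : IsUnit M.det) : M.PosDef := by
  exact h1.posDef_iff_isUnit.2 ((Matrix.isUnit_iff_isUnit_det M).2 h2)

lemma inv_neg' {n : Type*} [Fintype n] [DecidableEq n] (M : Matrix n n ℂ)
    (hM : IsUnit M.det) : (-M)⁻¹ = -(M⁻¹) := by
  apply Matrix.inv_eq_right_inv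
  rw [neg_mul_neg, Matrix.mul_nonsing_inv _ hM]

lemma inv_negOnePow_smul {n : Type*} [Fintype n] [DecidableEq n]
    (k : ℕ) (M : Matrix n n ℂ) (hM : IsUnit M.det) :
    (((-1 : ℂ) ^ k) • M)⁻¹ = ((-1 : ℂ) ^ k) • M⁻¹ := by
  apply Matrix.inv_eq_right_inv
  rw [Matrix.smul_mul, Matrix.mul_smul, smul_smul]
  have h1 : ((-1:ℂ)^k) * ((-1:ℂ)^k) = 1 := by
    rw [← pow_add]
    exact Even.neg_one_pow ⟨k, rfl⟩
  rw [h1, one_smul, Matrix.mul_nonsing_inv _ hM]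

lemma fromRows_add {m₁ m₂ n : Type*} (A₁ C₁ : Matrix m₁ n ℂ) (A₂ C₂ : Matrix m₂ n ℂ) :
    fromRows A₁ A₂ + fromRows C₁ C₂ = fromRows (A₁ + C₁) (A₂ + C₂) := by
  ext (i | i) j <;> simp

lemma inv_fromBlocks'' {q : ℕ} {m : Type*} [Fintype m] [DecidableEq m]
    (A : Matrix m m ℂ) (Y : Matrix m (Fin q) ℂ) (t : Mq q)
    (hA : A.IsHermitian) (hAu : IsUnit A.det)
    (hd : IsUnit (t - Yᴴ * A⁻¹ * Y).det) :
    (fromBlocks A Y Yᴴ t)⁻¹ =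
      fromBlocks (A⁻¹ + (A⁻¹ * Y) * (t - Yᴴ * A⁻¹ * Y)⁻¹ * (Yᴴ * A⁻¹))
        (-((A⁻¹ * Y) * (t - Yᴴ * A⁻¹ * Y)⁻¹))
        (-((t - Yᴴ * A⁻¹ * Y)⁻¹ * (Yᴴ * A⁻¹)))
        ((t - Yᴴ * A⁻¹ * Y)⁻¹) := by
  set d := t - Yᴴ * A⁻¹ * Y with hdDef
  apply Matrix.inv_eq_right_inv
  rw [fromBlocks_multiply, ← fromBlocks_one]
  have hA1 : A * A⁻¹ = 1 := Matrix.mul_nonsing_inv _ hAu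
  have hd1 : d * d⁻¹ = 1 := Matrix.mul_nonsing_inv _ hd
  have hYAY : Yᴴ * A⁻¹ * Y = t - d := by rw [hdDef]; abel
  have hA2 : ∀ X : Matrix m m ℂ, A * (A⁻¹ * X) = X := fun X => by
    rw [← Matrix.mul_assoc, hA1, Matrix.one_mul]
  have hA3 : ∀ X : Matrix m (Fin q) ℂ, A * (A⁻¹ * X) = X := fun X => by
    rw [← Matrix.mul_assoc, hA1, Matrix.one_mul]
  have hd2 : ∀ X : Matrix (Fin q) m ℂ, d * (d⁻¹ * X) = X := fun X => by
    rw [← Matrix.mul_assoc, hd1, Matrix.one_mul]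
  have hmid : ∀ X : Matrix (Fin q) m ℂ, Yᴴ * (A⁻¹ * (Y * X)) = t * X - d * X := fun X => by
    rw [← Matrix.mul_assoc, ← Matrix.mul_assoc, hYAY, Matrix.sub_mul]
  have hmid2 : Yᴴ * (A⁻¹ * (Y * d⁻¹)) = t * d⁻¹ - 1 := by
    rw [← Matrix.mul_assoc, ← Matrix.mul_assoc, hYAY, Matrix.sub_mul, hd1]
  rw [Matrix.fromBlocks_inj]
  refine ⟨?_, ?_, ?_, ?_⟩
  · simp only [Matrix.mul_add, Matrix.mul_neg, Matrix.mul_assoc, hA1, hA2]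
    abel
  · simp only [Matrix.mul_neg, Matrix.mul_assoc, hA3]
    abel
  · simp only [Matrix.mul_add, Matrix.mul_neg, Matrix.mul_assoc, hmid, hd2]
    abel
  · simp only [Matrix.mul_neg, Matrix.mul_assoc, hmid2]
    abel

end StmtAux
namespace StmtAux

/-! ### Index equivalences -/

def tEq (q : ℕ) : Fin 1 × Fin q ≃ Fin q where
  toFun p := p.2
  invFun b := (0, b)
  left_inv p := by
    obtain ⟨i, b⟩ := p
    have : i = 0 := Subsingleton.elim _ _
    simp [this]
  right_inv b := rfl

def sEq (q n : ℕ) : (Fin (n+1) × Fin q) ⊕ Fin q ≃ Fin (n+2) × Fin q where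
  toFun x := Sum.elim (fun r => (r.1.castSucc, r.2)) (fun b => (Fin.last (n+1), b)) x
  invFun p := if h : (p.1 : ℕ) < n + 1 then Sum.inl (⟨p.1, h⟩, p.2) else Sum.inr p.2
  left_inv x := by
    rcases x with ⟨i, b⟩ | b
    · simp [Fin.is_lt]
      exact dif_pos i.is_lt
    · simp
  right_inv p := by
    obtain ⟨i, b⟩ := p
    by_cases h : (i : ℕ) < n + 1
    · simp only [h, dif_pos]
      simp [Fin.ext_iff]
    · simp only [h, dif_neg, not_false_iff]
      simp only [Sum.elim_inr, Prod.mk.injEq, and_true]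
      apply Fin.ext
      simp only [Fin.val_last]
      omega

@[simp] lemma sEq_inl {q n : ℕ} (x : Fin (n+1) × Fin q) :
    sEq q n (Sum.inl x) = (x.1.castSucc, x.2) := rfl

@[simp] lemma sEq_inr {q n : ℕ} (b : Fin q) :
    sEq q n (Sum.inr b) = (Fin.last (n+1), b) := rfl

/-! ### Auxiliary sequences -/

def YA (q : ℕ) (s : ℕ → Mq q) (n : ℕ) : Matrix (Fin (n+1) × Fin q) (Fin q) ℂ :=
  Matrix.of fun p b => s (n + 1 + p.1.1) p.2 b

def YB (q : ℕ) (s : ℕ → Mq q) (n : ℕ) : Matrix (Fin (n+1) × Fin q) (Fin q) ℂ :=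
  Matrix.of fun p b => s (n + 2 + p.1.1) p.2 b

def cH (q : ℕ) (s : ℕ → Mq q) (n : ℕ) : Matrix (Fin (n+1) × Fin q) (Fin q) ℂ :=
  (Hmat q s n)⁻¹ * YA q s n

def cK (q : ℕ) (s : ℕ → Mq q) (n : ℕ) : Matrix (Fin (n+1) × Fin q) (Fin q) ℂ :=
  (Kmat q s n)⁻¹ * YB q s n

def aseq (q : ℕ) (s : ℕ → Mq q) : ℕ → Mq q
  | 0 => 1
  | n + 1 => -((vcol q n)ᴴ * cH q s n)

def bseq (q : ℕ) (s : ℕ → Mq q) : ℕ → Mq q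
  | 0 => s 0
  | n + 1 => s (n + 1) - (ycol q s n)ᴴ * cK q s n

section WithSeq

variable {q : ℕ} {s : ℕ → Mq q} (hs : IsStieltjesPD q s)
include hs

lemma HU (n : ℕ) : IsUnit (Hmat q s n).det :=
  (Matrix.isUnit_iff_isUnit_det _).1 (hs n).1.isUnit

lemma KU (n : ℕ) : IsUnit (Kmat q s n).det :=
  (Matrix.isUnit_iff_isUnit_det _).1 (hs n).2.isUnit

lemma sHerm (j : ℕ) : (s j)ᴴ = s j := by
  have h := (hs j).1.1
  ext a b
  have h2 := congrFun (congrFun h ((0 : Fin (j+1)), a)) (Fin.last j, b)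
  simpa [Matrix.conjTranspose_apply, Hmat] using h2

lemma sconj (j : ℕ) (a b : Fin q) : star (s j a b) = s j b a := by
  conv_rhs => rw [← sHerm hs j]
  simp [Matrix.conjTranspose_apply]

end WithSeq

end StmtAux
namespace StmtAux

def eS (q n : ℕ) : Fin (n+1) × Fin q → Fin (n+2) × Fin q := fun r => (r.1.succ, r.2)
def eC (q n : ℕ) : Fin (n+1) × Fin q → Fin (n+2) × Fin q := fun r => (r.1.castSucc, r.2)
def eL (q k : ℕ) : Fin q → Fin (k+1) × Fin q := fun b => (Fin.last k, b)
def e0 (q k : ℕ) : Fin q → Fin (k+1) × Fin q := fun b => (0, b)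

section Pull

variable {q : ℕ} {s : ℕ → Mq q}

lemma sarg {x y : ℕ} (h : x = y) (a b : Fin q) : s x a b = s y a b := by rw [h]

variable (hs : IsStieltjesPD q s)
include hs

set_option maxHeartbeats 800000

lemma pullH (n : ℕ) :
    (Hmat q s (n+1)).submatrix (sEq q n) (sEq q n) =
      fromBlocks (Hmat q s n) (YA q s n) (YA q s n)ᴴ (s (2*n+2)) := by
  ext x y
  rcases x with ⟨i, a⟩ | a <;> rcases y with ⟨j, b⟩ | b <;>
      simp only [Matrix.submatrix_apply, sEq_inl, sEq_inr, Matrix.fromBlocks_apply₁₁,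
        Matrix.fromBlocks_apply₁₂, Matrix.fromBlocks_apply₂₁, Matrix.fromBlocks_apply₂₂,
        Hmat, YA, Matrix.of_apply, Fin.coe_castSucc, Fin.val_last,
        Matrix.conjTranspose_apply]
  all_goals first
    | rfl
    | (apply sarg; omega)
    | (rw [sconj hs]; try apply sarg; try omega)
  all_goals first
    | rfl
    | (apply sarg; omega)
    | (rw [sconj hs]; try apply sarg; try omega)
  all_goals first
    | rfl
    | (apply sarg; omega)
    | (rw [sconj hs]; try apply sarg; try omega)
  all_goals first
    | rfl
    | (apply sarg; omega)
    | (rw [sconj hs]; try apply sarg; try omega)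

lemma pullK (n : ℕ) :
    (Kmat q s (n+1)).submatrix (sEq q n) (sEq q n) =
      fromBlocks (Kmat q s n) (YB q s n) (YB q s n)ᴴ (s (2*n+3)) := by
  ext x y
  rcases x with ⟨i, a⟩ | a <;> rcases y with ⟨j, b⟩ | b <;>
      simp only [Matrix.submatrix_apply, sEq_inl, sEq_inr, Matrix.fromBlocks_apply₁₁,
        Matrix.fromBlocks_apply₁₂, Matrix.fromBlocks_apply₂₁, Matrix.fromBlocks_apply₂₂,
        Kmat, YB, Matrix.of_apply, Fin.coe_castSucc, Fin.val_last,
        Matrix.conjTranspose_apply]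
  all_goals first
    | rfl
    | (apply sarg; omega)
    | (rw [sconj hs]; try apply sarg; try omega)
  all_goals first
    | rfl
    | (apply sarg; omega)
    | (rw [sconj hs]; try apply sarg; try omega)
  all_goals first
    | rfl
    | (apply sarg; omega)
    | (rw [sconj hs]; try apply sarg; try omega)
  all_goals first
    | rfl
    | (apply sarg; omega)
    | (rw [sconj hs]; try apply sarg; try omega)

omit hs in
lemma pullv (n : ℕ) :
    (vcol q (n+1)).submatrix (sEq q n) id = Matrix.fromRows (vcol q n) 0 := by
  ext x b
  rcases x with ⟨i, a⟩ | a <;>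
    simp [vcol, Fin.ext_iff, -Fin.val_eq_zero_iff]

omit hs in
lemma pully (n : ℕ) :
    (ycol q s (n+1)).submatrix (sEq q n) id = Matrix.fromRows (ycol q s n) (s (n+1)) := by
  ext x b
  rcases x with ⟨i, a⟩ | a <;> simp [ycol]

lemma pullHeS (n : ℕ) :
    (Hmat q s (n+1)).submatrix (sEq q n) (eS q n) =
      Matrix.fromRows (Kmat q s n) ((YB q s n)ᴴ) := by
  ext x y
  obtain ⟨j, b⟩ := y
  rcases x with ⟨i, a⟩ | a <;>
      simp only [Matrix.submatrix_apply, sEq_inl, sEq_inr, Matrix.fromRows_apply_inl,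
        Matrix.fromRows_apply_inr, Hmat, Kmat, YB, Matrix.of_apply, eS,
        Fin.coe_castSucc, Fin.val_last, Fin.val_succ, Matrix.conjTranspose_apply]
  all_goals first
    | rfl
    | (apply sarg; omega)
    | (rw [sconj hs]; try apply sarg; try omega)
  all_goals first
    | rfl
    | (apply sarg; omega)
    | (rw [sconj hs]; try apply sarg; try omega)

lemma pullHeC (n : ℕ) :
    (Hmat q s (n+1)).submatrix (sEq q n) (eC q n) =
      Matrix.fromRows (Hmat q s n) ((YA q s n)ᴴ) := by
  ext x y
  obtain ⟨j, b⟩ := y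
  rcases x with ⟨i, a⟩ | a <;>
      simp only [Matrix.submatrix_apply, sEq_inl, sEq_inr, Matrix.fromRows_apply_inl,
        Matrix.fromRows_apply_inr, Hmat, YA, Matrix.of_apply, eC,
        Fin.coe_castSucc, Fin.val_last, Matrix.conjTranspose_apply]
  all_goals first
    | rfl
    | (apply sarg; omega)
    | (rw [sconj hs]; try apply sarg; try omega)
  all_goals first
    | rfl
    | (apply sarg; omega)
    | (rw [sconj hs]; try apply sarg; try omega)

lemma pullKeC (n : ℕ) :
    (Kmat q s (n+1)).submatrix (sEq q n) (eC q n) =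
      Matrix.fromRows (Kmat q s n) ((YB q s n)ᴴ) := by
  ext x y
  obtain ⟨j, b⟩ := y
  rcases x with ⟨i, a⟩ | a <;>
      simp only [Matrix.submatrix_apply, sEq_inl, sEq_inr, Matrix.fromRows_apply_inl,
        Matrix.fromRows_apply_inr, Kmat, YB, Matrix.of_apply, eC,
        Fin.coe_castSucc, Fin.val_last, Matrix.conjTranspose_apply]
  all_goals first
    | rfl
    | (apply sarg; omega)
    | (rw [sconj hs]; try apply sarg; try omega)
  all_goals first
    | rfl
    | (apply sarg; omega)
    | (rw [sconj hs]; try apply sarg; try omega)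

omit hs in
lemma pullHeL (n : ℕ) :
    (Hmat q s (n+1)).submatrix (sEq q n) (eL q (n+1)) =
      Matrix.fromRows (YA q s n) (s (2*n+2)) := by
  ext x b
  rcases x with ⟨i, a⟩ | a <;>
      simp only [Matrix.submatrix_apply, sEq_inl, sEq_inr, Matrix.fromRows_apply_inl,
        Matrix.fromRows_apply_inr, Hmat, YA, Matrix.of_apply, eL,
        Fin.coe_castSucc, Fin.val_last]
  all_goals first
    | rfl
    | (apply sarg; omega)
    | (rw [sconj hs]; try apply sarg; try omega)
  all_goals first
    | rfl
    | (apply sarg; omega)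
    | (rw [sconj hs]; try apply sarg; try omega)

omit hs in
lemma pullKeL (n : ℕ) :
    (Kmat q s (n+1)).submatrix (sEq q n) (eL q (n+1)) =
      Matrix.fromRows (YB q s n) (s (2*n+3)) := by
  ext x b
  rcases x with ⟨i, a⟩ | a <;>
      simp only [Matrix.submatrix_apply, sEq_inl, sEq_inr, Matrix.fromRows_apply_inl,
        Matrix.fromRows_apply_inr, Kmat, YB, Matrix.of_apply, eL,
        Fin.coe_castSucc, Fin.val_last]
  all_goals first
    | rfl
    | (apply sarg; omega)
    | (rw [sconj hs]; try apply sarg; try omega)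
  all_goals first
    | rfl
    | (apply sarg; omega)
    | (rw [sconj hs]; try apply sarg; try omega)

omit hs in
lemma pullYA (n : ℕ) :
    (YA q s (n+1)).submatrix (sEq q n) id =
      Matrix.fromRows (YB q s n) (s (2*n+3)) := by
  ext x b
  rcases x with ⟨i, a⟩ | a <;>
      simp only [Matrix.submatrix_apply, sEq_inl, sEq_inr, Matrix.fromRows_apply_inl,
        Matrix.fromRows_apply_inr, YA, YB, Matrix.of_apply, id_eq,
        Fin.coe_castSucc, Fin.val_last]
  all_goals first
    | rfl
    | (apply sarg; omega)
    | (rw [sconj hs]; try apply sarg; try omega)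
  all_goals first
    | rfl
    | (apply sarg; omega)
    | (rw [sconj hs]; try apply sarg; try omega)

omit hs in
lemma pullYB (n : ℕ) :
    (YB q s (n+1)).submatrix (sEq q n) id =
      Matrix.fromRows ((YA q s (n+1)).submatrix (eS q n) id) (s (2*n+4)) := by
  ext x b
  rcases x with ⟨i, a⟩ | a <;>
      simp only [Matrix.submatrix_apply, sEq_inl, sEq_inr, Matrix.fromRows_apply_inl,
        Matrix.fromRows_apply_inr, YA, YB, Matrix.of_apply, id_eq, eS,
        Fin.coe_castSucc, Fin.val_last, Fin.val_succ]
  all_goals first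
    | rfl
    | (apply sarg; omega)
    | (rw [sconj hs]; try apply sarg; try omega)
  all_goals first
    | rfl
    | (apply sarg; omega)
    | (rw [sconj hs]; try apply sarg; try omega)

lemma pullKid (n : ℕ) :
    (Kmat q s (n+1)).submatrix (sEq q n) id =
      Matrix.fromRows ((Hmat q s (n+1)).submatrix (eS q n) id) ((YA q s (n+1))ᴴ) := by
  ext x y
  obtain ⟨j, b⟩ := y
  rcases x with ⟨i, a⟩ | a <;>
      simp only [Matrix.submatrix_apply, sEq_inl, sEq_inr, Matrix.fromRows_apply_inl,
        Matrix.fromRows_apply_inr, Hmat, Kmat, YA, Matrix.of_apply, id_eq, eS,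
        Fin.coe_castSucc, Fin.val_last, Fin.val_succ, Matrix.conjTranspose_apply]
  all_goals first
    | rfl
    | (apply sarg; omega)
    | (rw [sconj hs]; try apply sarg; try omega)
  all_goals first
    | rfl
    | (apply sarg; omega)
    | (rw [sconj hs]; try apply sarg; try omega)

end Pull

end StmtAux
namespace StmtAux

section Schur

variable {q : ℕ} {s : ℕ → Mq q}

lemma pull_inj {α β γ : Type*} (e : α ≃ β) {M N : Matrix β γ ℂ}
    (h : M.submatrix e id = N.submatrix e id) : M = N := by
  ext p r
  have h2 := congrFun (congrFun h (e.symm p)) r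
  simpa using h2

variable (hs : IsStieltjesPD q s)
include hs

lemma ZA_eq (k : ℕ) :
    (Matrix.of fun (a : Fin q) (r : Fin (k+1) × Fin q) => s (k + 1 + r.1.1) a r.2) =
      (YA q s k)ᴴ := by
  ext a r
  simp only [Matrix.of_apply, Matrix.conjTranspose_apply, YA]
  exact (sconj hs _ _ _).symm

lemma ZB_eq (k : ℕ) :
    (Matrix.of fun (a : Fin q) (r : Fin (k+1) × Fin q) => s (k + 2 + r.1.1) a r.2) =
      (YB q s k)ᴴ := by
  ext a r
  simp only [Matrix.of_apply, Matrix.conjTranspose_apply, YB]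
  exact (sconj hs _ _ _).symm

lemma qEven_succ (k : ℕ) :
    qEven q s (k+1) = s (2*k+2) - (YA q s k)ᴴ * (Hmat q s k)⁻¹ * YA q s k := by
  show s (2*(k+1)) - _ = _
  rw [ZA_eq hs k, show 2*(k+1) = 2*k+2 by ring]
  rfl

lemma qOdd_succ (k : ℕ) :
    qOdd q s (k+1) = s (2*k+3) - (YB q s k)ᴴ * (Kmat q s k)⁻¹ * YB q s k := by
  show s (2*(k+1)+1) - _ = _
  rw [ZB_eq hs k, show 2*(k+1)+1 = 2*k+3 by ring]
  rfl

lemma HcH (n : ℕ) : Hmat q s n * cH q s n = YA q s n := by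
  rw [cH, ← Matrix.mul_assoc, Matrix.mul_nonsing_inv _ (HU hs n), Matrix.one_mul]

lemma KcK (n : ℕ) : Kmat q s n * cK q s n = YB q s n := by
  rw [cK, ← Matrix.mul_assoc, Matrix.mul_nonsing_inv _ (KU hs n), Matrix.one_mul]

lemma YAcH (k : ℕ) : (YA q s k)ᴴ * cH q s k = s (2*k+2) - qEven q s (k+1) := by
  rw [qEven_succ hs k, cH, ← Matrix.mul_assoc]
  abel

lemma YBcK (k : ℕ) : (YB q s k)ᴴ * cK q s k = s (2*k+3) - qOdd q s (k+1) := by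
  rw [qOdd_succ hs k, cK, ← Matrix.mul_assoc]
  abel

lemma Hmat0 : (Hmat q s 0).submatrix (tEq q).symm (tEq q).symm = s 0 := by
  ext a b
  simp [Hmat, tEq]

lemma Kmat0 : (Kmat q s 0).submatrix (tEq q).symm (tEq q).symm = s 1 := by
  ext a b
  simp [Kmat, tEq]

lemma qEven_PD : ∀ n, (qEven q s n).PosDef
  | 0 => by
      have h := posDef_submatrix_equiv (hs 0).1 (tEq q).symm
      rwa [Hmat0 hs] at h
  | n + 1 => by
      have hX : ((Hmat q s (n+1)).submatrix (sEq q n) (sEq q n)).PosDef :=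
        posDef_submatrix_equiv (hs (n+1)).1 _
      rw [pullH hs n] at hX
      haveI := Matrix.invertibleOfIsUnitDet _ (HU hs n)
      have h1 := (Matrix.PosDef.fromBlocks₁₁ (YA q s n) (s (2*n+2)) (hs n).1).1
        hX.posSemidef
      have h2 : IsUnit (s (2*n+2) - (YA q s n)ᴴ * (Hmat q s n)⁻¹ * YA q s n).det := by
        have h3 := Matrix.det_fromBlocks₁₁ (Hmat q s n) (YA q s n) ((YA q s n)ᴴ) (s (2*n+2))
        rw [Matrix.invOf_eq_nonsing_inv] at h3
        have h4 : IsUnit (fromBlocks (Hmat q s n) (YA q s n) ((YA q s n)ᴴ) (s (2*n+2))).det := by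
          rw [← pullH hs n, Matrix.det_submatrix_equiv_self]
          exact HU hs (n+1)
        rw [h3] at h4
        exact isUnit_of_mul_isUnit_right h4
      have h5 := posDef_of_posSemidef h1 h2
      rwa [← qEven_succ hs n] at h5

lemma qOdd_PD : ∀ n, (qOdd q s n).PosDef
  | 0 => by
      have h := posDef_submatrix_equiv (hs 0).2 (tEq q).symm
      rwa [Kmat0 hs] at h
  | n + 1 => by
      have hX : ((Kmat q s (n+1)).submatrix (sEq q n) (sEq q n)).PosDef :=
        posDef_submatrix_equiv (hs (n+1)).2 _
      rw [pullK hs n] at hX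
      haveI := Matrix.invertibleOfIsUnitDet _ (KU hs n)
      have h1 := (Matrix.PosDef.fromBlocks₁₁ (YB q s n) (s (2*n+3)) (hs n).2).1
        hX.posSemidef
      have h2 : IsUnit (s (2*n+3) - (YB q s n)ᴴ * (Kmat q s n)⁻¹ * YB q s n).det := by
        have h3 := Matrix.det_fromBlocks₁₁ (Kmat q s n) (YB q s n) ((YB q s n)ᴴ) (s (2*n+3))
        rw [Matrix.invOf_eq_nonsing_inv] at h3
        have h4 : IsUnit (fromBlocks (Kmat q s n) (YB q s n) ((YB q s n)ᴴ) (s (2*n+3))).det := by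
          rw [← pullK hs n, Matrix.det_submatrix_equiv_self]
          exact KU hs (n+1)
        rw [h3] at h4
        exact isUnit_of_mul_isUnit_right h4
      have h5 := posDef_of_posSemidef h1 h2
      rwa [← qOdd_succ hs n] at h5

lemma qEU (n : ℕ) : IsUnit (qEven q s n).det :=
  (Matrix.isUnit_iff_isUnit_det _).1 (qEven_PD hs n).isUnit

lemma qOU (n : ℕ) : IsUnit (qOdd q s n).det :=
  (Matrix.isUnit_iff_isUnit_det _).1 (qOdd_PD hs n).isUnit

lemma qEH (n : ℕ) : (qEven q s n)ᴴ = qEven q s n := (qEven_PD hs n).1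

lemma qOH (n : ℕ) : (qOdd q s n)ᴴ = qOdd q s n := (qOdd_PD hs n).1

end Schur

end StmtAux
namespace StmtAux

section Sel

variable {q : ℕ} {s : ℕ → Mq q}

lemma vcol_eq (k : ℕ) :
    vcol q k = (1 : Matrix (Fin (k+1) × Fin q) (Fin (k+1) × Fin q) ℂ).submatrix id (e0 q k) := by
  ext p b
  simp [vcol, Matrix.one_apply, e0, Prod.ext_iff, Fin.ext_iff, -Fin.val_eq_zero_iff]

lemma vrowmul {X : Type*} (k : ℕ) (M : Matrix (Fin (k+1) × Fin q) X ℂ) :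
    (vcol q k)ᴴ * M = M.submatrix (e0 q k) id := by
  rw [vcol_eq, Matrix.conjTranspose_submatrix, Matrix.conjTranspose_one, oneSub_mul]

lemma sel1 (n : ℕ) :
    ((1 : Matrix (Fin (n+2) × Fin q) (Fin (n+2) × Fin q) ℂ).submatrix id (eS q n)).submatrix
      (e0 q (n+1)) id = 0 := by
  ext b r
  simp [Matrix.one_apply, e0, eS, Prod.ext_iff, Fin.ext_iff, Fin.val_succ, -Fin.val_eq_zero_iff]

lemma sel2 (n : ℕ) :
    ((1 : Matrix (Fin (n+2) × Fin q) (Fin (n+2) × Fin q) ℂ).submatrix id (eC q n)).submatrix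
      (e0 q (n+1)) id = (vcol q n)ᴴ := by
  ext b r
  by_cases h1 : (r.1 : ℕ) = 0 <;> by_cases h2 : r.2 = b <;>
    simp [Matrix.one_apply, vcol, e0, eC, Matrix.conjTranspose_apply, Prod.ext_iff,
      Fin.ext_iff, h1, h2, eq_comm, -Fin.val_eq_zero_iff]

lemma sel3 (n : ℕ) :
    ((1 : Matrix (Fin (n+2) × Fin q) (Fin (n+2) × Fin q) ℂ).submatrix id (eL q (n+1))).submatrix
      (e0 q (n+1)) id = 0 := by
  ext b r
  simp [Matrix.one_apply, e0, eL, Prod.ext_iff, Fin.ext_iff]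

lemma YAe0 (k : ℕ) : (YA q s k).submatrix (e0 q k) id = s (k+1) := by
  ext b c
  simp [YA, e0]

variable (hs : IsStieltjesPD q s)
include hs

lemma yrowH (k : ℕ) : (ycol q s k)ᴴ = (Hmat q s k).submatrix (e0 q k) id := by
  ext b r
  simp only [ycol, Hmat, Matrix.conjTranspose_apply, Matrix.submatrix_apply, Matrix.of_apply,
    e0, id_eq, Fin.val_zero, Nat.zero_add]
  rw [sconj hs]

lemma yCeC (n : ℕ) :
    ((ycol q s (n+1))ᴴ).submatrix id (eC q n) = (ycol q s n)ᴴ := by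
  ext b r
  simp [ycol, eC, Matrix.conjTranspose_apply]

lemma yCeL (n : ℕ) :
    ((ycol q s (n+1))ᴴ).submatrix id (eL q (n+1)) = s (n+1) := by
  ext b c
  simp only [ycol, eL, Matrix.conjTranspose_apply, Matrix.submatrix_apply, Matrix.of_apply,
    id_eq, Fin.val_last]
  rw [sconj hs]

end Sel

section Rec

variable {q : ℕ} {s : ℕ → Mq q} (hs : IsStieltjesPD q s)
include hs

lemma cH_succ (n : ℕ) :
    cH q s (n+1) =
      (1 : Matrix (Fin (n+2) × Fin q) (Fin (n+2) × Fin q) ℂ).submatrix id (eS q n) * cK q s n +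
      (1 : Matrix (Fin (n+2) × Fin q) (Fin (n+2) × Fin q) ℂ).submatrix id (eC q n) *
          (-(cH q s n)) * ((qEven q s (n+1))⁻¹ * qOdd q s (n+1)) +
      (1 : Matrix (Fin (n+2) × Fin q) (Fin (n+2) × Fin q) ℂ).submatrix id (eL q (n+1)) *
          ((qEven q s (n+1))⁻¹ * qOdd q s (n+1)) := by
  set C := (qEven q s (n+1))⁻¹ * qOdd q s (n+1) with hCdef
  set R := (1 : Matrix (Fin (n+2) × Fin q) (Fin (n+2) × Fin q) ℂ).submatrix id (eS q n) *
      cK q s n +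
      (1 : Matrix (Fin (n+2) × Fin q) (Fin (n+2) × Fin q) ℂ).submatrix id (eC q n) *
          (-(cH q s n)) * C +
      (1 : Matrix (Fin (n+2) × Fin q) (Fin (n+2) × Fin q) ℂ).submatrix id (eL q (n+1)) * C
    with hR
  have hC : (qEven q s (n+1)) * C = qOdd q s (n+1) := by
    rw [hCdef, ← Matrix.mul_assoc, Matrix.mul_nonsing_inv _ (qEU hs (n+1)), Matrix.one_mul]
  have key : Hmat q s (n+1) * R = YA q s (n+1) := by
    apply pull_inj (sEq q n)
    have hmul : (Hmat q s (n+1) * R).submatrix (sEq q n) id =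
        (Hmat q s (n+1)).submatrix (sEq q n) id * R := by
      rw [Matrix.submatrix_mul (Hmat q s (n+1)) R (sEq q n) id id Function.bijective_id]
      rfl
    rw [hmul, hR]
    simp only [Matrix.mul_add, ← Matrix.mul_assoc, mul_oneSub,
      Matrix.submatrix_submatrix, Function.comp_id, Function.id_comp]
    rw [pullHeS hs n, pullHeC hs n, pullHeL n, pullYA n]
    simp only [Matrix.fromRows_mul, Matrix.mul_neg, KcK hs n, YBcK hs n, HcH hs n,
      YAcH hs n]
    simp only [Matrix.neg_mul, Matrix.fromRows_mul, Matrix.sub_mul, hC]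
    ext (x | x) b <;> simp <;> ring
  rw [cH, ← key, ← Matrix.mul_assoc, Matrix.nonsing_inv_mul _ (HU hs (n+1)), Matrix.one_mul]

lemma aseq_succ_succ (n : ℕ) :
    aseq q s (n+2) =
      -(aseq q s (n+1) * ((qEven q s (n+1))⁻¹ * qOdd q s (n+1))) := by
  have ha : (vcol q n)ᴴ * -(cH q s n) = aseq q s (n+1) := by
    rw [Matrix.mul_neg]
    rfl
  show -((vcol q (n+1))ᴴ * cH q s (n+1)) = _
  rw [show -(aseq q s (n+1) * ((qEven q s (n+1))⁻¹ * qOdd q s (n+1))) =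
    -(aseq q s (n+1) * (qEven q s (n+1))⁻¹ * qOdd q s (n+1)) by rw [Matrix.mul_assoc]]
  rw [cH_succ hs n]
  simp only [Matrix.mul_add, ← Matrix.mul_assoc, vrowmul, sel1, sel2, sel3,
    Matrix.zero_mul, zero_add, add_zero, ha]

lemma cK_succ (n : ℕ) :
    cK q s (n+1) =
      cH q s (n+1) +
      (1 : Matrix (Fin (n+2) × Fin q) (Fin (n+2) × Fin q) ℂ).submatrix id (eC q n) *
          (-(cK q s n)) * ((qOdd q s (n+1))⁻¹ * qEven q s (n+2)) +
      (1 : Matrix (Fin (n+2) × Fin q) (Fin (n+2) × Fin q) ℂ).submatrix id (eL q (n+1)) *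
          ((qOdd q s (n+1))⁻¹ * qEven q s (n+2)) := by
  set D := (qOdd q s (n+1))⁻¹ * qEven q s (n+2) with hDdef
  set R := cH q s (n+1) +
      (1 : Matrix (Fin (n+2) × Fin q) (Fin (n+2) × Fin q) ℂ).submatrix id (eC q n) *
          (-(cK q s n)) * D +
      (1 : Matrix (Fin (n+2) × Fin q) (Fin (n+2) × Fin q) ℂ).submatrix id (eL q (n+1)) * D
    with hR
  have hD : (qOdd q s (n+1)) * D = qEven q s (n+2) := by
    rw [hDdef, ← Matrix.mul_assoc, Matrix.mul_nonsing_inv _ (qOU hs (n+1)), Matrix.one_mul]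
  have key : Kmat q s (n+1) * R = YB q s (n+1) := by
    apply pull_inj (sEq q n)
    have hmul : (Kmat q s (n+1) * R).submatrix (sEq q n) id =
        (Kmat q s (n+1)).submatrix (sEq q n) id * R := by
      rw [Matrix.submatrix_mul (Kmat q s (n+1)) R (sEq q n) id id Function.bijective_id]
      rfl
    have hH : (Hmat q s (n+1)).submatrix (eS q n) id * cH q s (n+1) =
        (YA q s (n+1)).submatrix (eS q n) id := by
      rw [← HcH hs (n+1), Matrix.submatrix_mul (Hmat q s (n+1)) (cH q s (n+1)) (eS q n)
        id id Function.bijective_id]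
      rfl
    have hY : (YA q s (n+1))ᴴ * cH q s (n+1) = s (2*n+4) - qEven q s (n+2) := by
      have h := YAcH hs (n+1)
      rwa [show 2*(n+1)+2 = 2*n+4 by ring] at h
    rw [hmul, hR]
    simp only [Matrix.mul_add, ← Matrix.mul_assoc, mul_oneSub,
      Matrix.submatrix_submatrix, Function.comp_id, Function.id_comp]
    rw [pullKid hs n, pullKeC hs n, pullKeL n, pullYB n]
    simp only [Matrix.fromRows_mul, Matrix.mul_neg, KcK hs n, YBcK hs n, hH, hY]
    simp only [Matrix.neg_mul, Matrix.fromRows_mul, Matrix.sub_mul, hD]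
    ext (x | x) b <;> simp <;> ring
  rw [cK, ← key, ← Matrix.mul_assoc, Matrix.nonsing_inv_mul _ (KU hs (n+1)), Matrix.one_mul]

lemma yAe0succ (n : ℕ) :
    (ycol q s (n+1))ᴴ * cH q s (n+1) = s (n+2) := by
  rw [yrowH hs (n+1)]
  have h : (Hmat q s (n+1)).submatrix (e0 q (n+1)) id * cH q s (n+1) =
      (Hmat q s (n+1) * cH q s (n+1)).submatrix (e0 q (n+1)) id := by
    rw [Matrix.submatrix_mul (Hmat q s (n+1)) (cH q s (n+1)) (e0 q (n+1)) id id
      Function.bijective_id]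
    rfl
  rw [h, HcH hs (n+1), YAe0]

lemma bseq_succ_succ (n : ℕ) :
    bseq q s (n+2) =
      -(bseq q s (n+1) * ((qOdd q s (n+1))⁻¹ * qEven q s (n+2))) := by
  have hy1 : ((ycol q s (n+1))ᴴ).submatrix id (eC q n) * -(cK q s n) =
      -((ycol q s n)ᴴ * cK q s n) := by
    rw [yCeC hs n, Matrix.mul_neg]
  show s (n+2) - (ycol q s (n+1))ᴴ * cK q s (n+1) = _
  rw [cK_succ hs n]
  simp only [Matrix.mul_add, ← Matrix.mul_assoc, mul_oneSub, yAe0succ hs n,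
    hy1, yCeL hs n]
  have hb : -((ycol q s n)ᴴ * cK q s n) = bseq q s (n+1) - s (n+1) := by
    show _ = (s (n+1) - (ycol q s n)ᴴ * cK q s n) - s (n+1)
    abel
  rw [hb, Matrix.sub_mul, Matrix.sub_mul, Matrix.mul_assoc (bseq q s (n+1)),
    Matrix.mul_assoc (s (n+1))]
  abel

end Rec

end StmtAux
namespace StmtAux

section Base

variable {q : ℕ} {s : ℕ → Mq q} (hs : IsStieltjesPD q s)
include hs

lemma tH : Hmat q s 0 = (s 0).submatrix (tEq q) (tEq q) := by
  ext p r
  simp [Hmat, tEq]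

lemma tK : Kmat q s 0 = (s 1).submatrix (tEq q) (tEq q) := by
  ext p r
  simp [Kmat, tEq]

omit hs in
lemma tYA : YA q s 0 = (s 1).submatrix (tEq q) id := by
  ext p b
  simp [YA, tEq]

omit hs in
lemma tYB : YB q s 0 = (s 2).submatrix (tEq q) id := by
  ext p b
  simp [YB, tEq]

omit hs in
lemma tY : ycol q s 0 = (s 0).submatrix (tEq q) id := by
  ext p b
  simp [ycol, tEq]

lemma sU0 : IsUnit (s 0).det := qEU hs 0

lemma sU1 : IsUnit (s 1).det := qOU hs 0

lemma cH0 : cH q s 0 = ((s 0)⁻¹ * s 1).submatrix (tEq q) id := by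
  rw [cH, tH hs, tYA, ← submatrix_inv (s 0) (sU0 hs) (tEq q), Matrix.submatrix_mul_equiv]

lemma cK0 : cK q s 0 = ((s 1)⁻¹ * s 2).submatrix (tEq q) id := by
  rw [cK, tK hs, tYB, ← submatrix_inv (s 1) (sU1 hs) (tEq q), Matrix.submatrix_mul_equiv]

lemma aseq1 : aseq q s 1 = -((s 0)⁻¹ * s 1) := by
  show -((vcol q 0)ᴴ * cH q s 0) = _
  rw [vrowmul, cH0 hs, Matrix.submatrix_submatrix]
  have h1 : (⇑(tEq q)) ∘ (e0 q 0) = id := rfl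
  have h2 : (id : Fin q → Fin q) ∘ id = id := rfl
  rw [h1, h2, Matrix.submatrix_id_id]

lemma bseq1 : bseq q s 1 = s 1 - s 0 * ((s 1)⁻¹ * s 2) := by
  show s 1 - (ycol q s 0)ᴴ * cK q s 0 = _
  rw [tY, cK0 hs, Matrix.conjTranspose_submatrix, sHerm hs, Matrix.submatrix_mul_equiv,
    Matrix.submatrix_id_id]

lemma qE1 : qEven q s 1 = s 2 - s 1 * ((s 0)⁻¹ * s 1) := by
  rw [qEven_succ hs 0, tH hs, tYA, Matrix.conjTranspose_submatrix, sHerm hs,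
    ← submatrix_inv (s 0) (sU0 hs) (tEq q), Matrix.submatrix_mul_equiv,
    Matrix.submatrix_mul_equiv, Matrix.submatrix_id_id, Matrix.mul_assoc]

lemma aseq_succ (n : ℕ) :
    aseq q s (n+1) = -(aseq q s n * ((qEven q s n)⁻¹ * qOdd q s n)) := by
  cases n with
  | zero =>
      rw [aseq1 hs]
      show _ = -((1 : Mq q) * ((s 0)⁻¹ * s 1))
      rw [Matrix.one_mul]
  | succ n => exact aseq_succ_succ hs n

lemma bseq_succ (n : ℕ) :
    bseq q s (n+1) = -(bseq q s n * ((qOdd q s n)⁻¹ * qEven q s (n+1))) := by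
  cases n with
  | zero =>
      rw [bseq1 hs, qE1 hs]
      show _ = -(s 0 * ((s 1)⁻¹ * (s 2 - s 1 * ((s 0)⁻¹ * s 1))))
      rw [Matrix.mul_sub ((s 1)⁻¹), ← Matrix.mul_assoc ((s 1)⁻¹) (s 1),
        Matrix.nonsing_inv_mul _ (sU1 hs), Matrix.one_mul, Matrix.mul_sub (s 0),
        ← Matrix.mul_assoc (s 0) ((s 0)⁻¹), Matrix.mul_nonsing_inv _ (sU0 hs),
        Matrix.one_mul]
      abel
  | succ n => exact bseq_succ_succ hs n

end Base

section MLeq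

variable {q : ℕ} {s : ℕ → Mq q} (hs : IsStieltjesPD q s)
include hs

lemma cHH (k : ℕ) : (cH q s k)ᴴ = (YA q s k)ᴴ * (Hmat q s k)⁻¹ := by
  rw [cH, Matrix.conjTranspose_mul, Matrix.conjTranspose_nonsing_inv, (hs k).1.1.eq]

lemma cKH (k : ℕ) : (cK q s k)ᴴ = (YB q s k)ᴴ * (Kmat q s k)⁻¹ := by
  rw [cK, Matrix.conjTranspose_mul, Matrix.conjTranspose_nonsing_inv, (hs k).2.1.eq]

lemma DSM_eq (k : ℕ) :
    DSM q s k = aseq q s k * (qEven q s k)⁻¹ * (aseq q s k)ᴴ := by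
  cases k with
  | zero =>
      show (s 0)⁻¹ = (1 : Mq q) * (s 0)⁻¹ * (1 : Mq q)ᴴ
      rw [Matrix.conjTranspose_one, Matrix.one_mul, Matrix.mul_one]
  | succ k =>
      have hq : IsUnit (s (2*k+2) - (YA q s k)ᴴ * (Hmat q s k)⁻¹ * YA q s k).det := by
        have h := qEU hs (k+1)
        rwa [qEven_succ hs k] at h
      have h1 : (vcol q (k+1))ᴴ * (Hmat q s (k+1))⁻¹ * vcol q (k+1) =
          ((vcol q (k+1)).submatrix (sEq q k) id)ᴴ *
            ((Hmat q s (k+1)).submatrix (sEq q k) (sEq q k))⁻¹ *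
            ((vcol q (k+1)).submatrix (sEq q k) id) := by
        rw [← submatrix_inv _ (HU hs (k+1)) (sEq q k), Matrix.conjTranspose_submatrix,
          Matrix.submatrix_mul_equiv, Matrix.submatrix_mul_equiv, Matrix.submatrix_id_id]
      show _ - _ = _
      rw [h1, pullv k, pullH hs k,
        inv_fromBlocks'' (Hmat q s k) (YA q s k) (s (2*k+2)) (hs k).1.1 (HU hs k) hq,
        Matrix.conjTranspose_fromRows_eq_fromCols_conjTranspose,
        Matrix.conjTranspose_zero, Matrix.fromCols_mul_fromBlocks,
        Matrix.fromCols_mul_fromRows]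
      have hvc2 : aseq q s (k+1) = -((vcol q k)ᴴ * ((Hmat q s k)⁻¹ * YA q s k)) := rfl
      rw [qEven_succ hs k, hvc2]
      simp only [Matrix.zero_mul, Matrix.mul_zero, add_zero, zero_add, Matrix.mul_add,
        Matrix.add_mul, Matrix.conjTranspose_neg, Matrix.conjTranspose_mul,
        Matrix.conjTranspose_conjTranspose, Matrix.conjTranspose_nonsing_inv,
        (hs k).1.1.eq, Matrix.neg_mul, Matrix.mul_neg, neg_neg, Matrix.mul_assoc]
      abel

lemma DSL_eq (k : ℕ) :
    DSL q s k = bseq q s k * (qOdd q s k)⁻¹ * (bseq q s k)ᴴ := by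
  cases k with
  | zero =>
      show s 0 * (s 1)⁻¹ * s 0 = s 0 * (s 1)⁻¹ * (s 0)ᴴ
      rw [sHerm hs 0]
  | succ k =>
      have hq : IsUnit (s (2*k+3) - (YB q s k)ᴴ * (Kmat q s k)⁻¹ * YB q s k).det := by
        have h := qOU hs (k+1)
        rwa [qOdd_succ hs k] at h
      have h1 : (ycol q s (k+1))ᴴ * (Kmat q s (k+1))⁻¹ * ycol q s (k+1) =
          ((ycol q s (k+1)).submatrix (sEq q k) id)ᴴ *
            ((Kmat q s (k+1)).submatrix (sEq q k) (sEq q k))⁻¹ *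
            ((ycol q s (k+1)).submatrix (sEq q k) id) := by
        rw [← submatrix_inv _ (KU hs (k+1)) (sEq q k), Matrix.conjTranspose_submatrix,
          Matrix.submatrix_mul_equiv, Matrix.submatrix_mul_equiv, Matrix.submatrix_id_id]
      show _ - _ = _
      rw [h1, pully k, pullK hs k,
        inv_fromBlocks'' (Kmat q s k) (YB q s k) (s (2*k+3)) (hs k).2.1 (KU hs k) hq,
        Matrix.conjTranspose_fromRows_eq_fromCols_conjTranspose,
        Matrix.fromCols_mul_fromBlocks, Matrix.fromCols_mul_fromRows]
      have hb2 : bseq q s (k+1) =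
          s (k+1) - (ycol q s k)ᴴ * ((Kmat q s k)⁻¹ * YB q s k) := rfl
      rw [qOdd_succ hs k, hb2]
      simp only [Matrix.conjTranspose_sub, Matrix.mul_add, Matrix.add_mul,
        Matrix.mul_sub, Matrix.sub_mul, Matrix.conjTranspose_mul,
        Matrix.conjTranspose_conjTranspose, Matrix.conjTranspose_nonsing_inv,
        (hs k).2.1.eq, sHerm hs, Matrix.neg_mul, Matrix.mul_neg, neg_neg,
        Matrix.mul_assoc]
      abel


end MLeq

end StmtAux
namespace StmtAux

lemma oprod_zero {α : Type*} [Monoid α] (f : ℕ → α) : oprod f 0 = f 0 := by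
  show ((List.range 1).map f).prod = f 0
  rw [show List.range 1 = [0] from rfl]
  simp

lemma oprod_succ {α : Type*} [Monoid α] (f : ℕ → α) (n : ℕ) :
    oprod f (n+1) = oprod f n * f (n+1) := by
  simp [oprod, List.range_succ, mul_assoc]

section Tele

variable {q : ℕ} {s : ℕ → Mq q} (hs : IsStieltjesPD q s)
include hs

lemma aU : ∀ n, IsUnit (aseq q s n).det := by
  intro n
  induction n with
  | zero =>
      show IsUnit (1 : Mq q).det
      simp
  | succ n ih =>
      rw [aseq_succ hs n, Matrix.det_neg, Matrix.det_mul, Matrix.det_mul]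
      exact (isUnit_one.neg.pow _).mul (ih.mul
        ((Matrix.isUnit_nonsing_inv_det _ (qEU hs n)).mul (qOU hs n)))

lemma aHU (n : ℕ) : IsUnit ((aseq q s n)ᴴ).det := by
  rw [Matrix.det_conjTranspose]
  exact (aU hs n).star

lemma aHb : ∀ n, (aseq q s n)ᴴ * bseq q s n = qEven q s n := by
  intro n
  induction n with
  | zero =>
      show (1 : Mq q)ᴴ * s 0 = s 0
      rw [Matrix.conjTranspose_one, Matrix.one_mul]
  | succ n ih =>
      have hab : ∀ X : Mq q, (aseq q s n)ᴴ * (bseq q s n * X) = qEven q s n * X := by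
        intro X
        rw [← Matrix.mul_assoc, ih]
      have hEE : ∀ X : Mq q, (qEven q s n)⁻¹ * (qEven q s n * X) = X := by
        intro X
        rw [← Matrix.mul_assoc, Matrix.nonsing_inv_mul _ (qEU hs n), Matrix.one_mul]
      have hOO : ∀ X : Mq q, qOdd q s n * ((qOdd q s n)⁻¹ * X) = X := by
        intro X
        rw [← Matrix.mul_assoc, Matrix.mul_nonsing_inv _ (qOU hs n), Matrix.one_mul]
      rw [aseq_succ hs n, bseq_succ hs n, Matrix.conjTranspose_neg, Matrix.neg_mul,
        Matrix.mul_neg, neg_neg, Matrix.conjTranspose_mul, Matrix.conjTranspose_mul,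
        Matrix.conjTranspose_nonsing_inv, qEH hs n, qOH hs n]
      simp only [Matrix.mul_assoc, hab, hEE, hOO]

lemma ML (k : ℕ) :
    DSM q s k * DSL q s k = -(aseq q s k * (aseq q s (k+1))⁻¹) := by
  have hbH : (bseq q s k)ᴴ = qEven q s k * (aseq q s k)⁻¹ := by
    have h := congrArg Matrix.conjTranspose (aHb hs k)
    rw [Matrix.conjTranspose_mul, Matrix.conjTranspose_conjTranspose, qEH hs k] at h
    have h2 := congrArg (fun M : Mq q => M * (aseq q s k)⁻¹) h
    rwa [Matrix.mul_assoc, Matrix.mul_nonsing_inv _ (aU hs k), Matrix.mul_one] at h2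
  have hdet : IsUnit (aseq q s k * ((qEven q s k)⁻¹ * qOdd q s k)).det := by
    rw [Matrix.det_mul, Matrix.det_mul]
    exact (aU hs k).mul ((Matrix.isUnit_nonsing_inv_det _ (qEU hs k)).mul (qOU hs k))
  have hainv : (aseq q s (k+1))⁻¹ =
      -((qOdd q s k)⁻¹ * (qEven q s k * (aseq q s k)⁻¹)) := by
    rw [aseq_succ hs k, inv_neg' _ hdet, Matrix.mul_inv_rev, Matrix.mul_inv_rev,
      Matrix.nonsing_inv_nonsing_inv _ (qEU hs k), Matrix.mul_assoc]
  have hab : ∀ X : Mq q, (aseq q s k)ᴴ * (bseq q s k * X) = qEven q s k * X := by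
    intro X
    rw [← Matrix.mul_assoc, aHb hs k]
  have hEE : ∀ X : Mq q, (qEven q s k)⁻¹ * (qEven q s k * X) = X := by
    intro X
    rw [← Matrix.mul_assoc, Matrix.nonsing_inv_mul _ (qEU hs k), Matrix.one_mul]
  rw [DSM_eq hs k, DSL_eq hs k, hbH, hainv]
  simp only [Matrix.mul_assoc, hab, hEE, Matrix.mul_neg, neg_neg]

lemma EO1 (j : ℕ) :
    (qEven q s j)⁻¹ * qOdd q s j = -((aseq q s j)⁻¹ * aseq q s (j+1)) := by
  rw [aseq_succ hs j, Matrix.mul_neg, neg_neg, ← Matrix.mul_assoc,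
    Matrix.nonsing_inv_mul _ (aU hs j), Matrix.one_mul]

lemma EO2 (j : ℕ) :
    qEven q s j * (qOdd q s j)⁻¹ = -((aseq q s j)ᴴ * ((aseq q s (j+1))ᴴ)⁻¹) := by
  have h := congrArg Matrix.conjTranspose (aseq_succ hs j)
  rw [Matrix.conjTranspose_neg, Matrix.conjTranspose_mul, Matrix.conjTranspose_mul,
    Matrix.conjTranspose_nonsing_inv, qEH hs j, qOH hs j] at h
  have hdet2 : IsUnit (qOdd q s j * (qEven q s j)⁻¹ * (aseq q s j)ᴴ).det := by
    rw [Matrix.det_mul, Matrix.det_mul]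
    exact ((qOU hs j).mul (Matrix.isUnit_nonsing_inv_det _ (qEU hs j))).mul (aHU hs j)
  rw [h, inv_neg' _ hdet2, Matrix.mul_inv_rev, Matrix.mul_inv_rev,
    Matrix.nonsing_inv_nonsing_inv _ (qEU hs j), Matrix.mul_neg, neg_neg,
    ← Matrix.mul_assoc, ← Matrix.mul_assoc, Matrix.mul_nonsing_inv _ (aHU hs j),
    Matrix.one_mul]

lemma prodML (m : ℕ) :
    oprod (fun j => DSM q s j * DSL q s j) m = ((-1:ℂ)^(m+1)) • (aseq q s (m+1))⁻¹ := by
  induction m with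
  | zero =>
      rw [oprod_zero, ML hs 0]
      show -((1 : Mq q) * _) = _
      rw [Matrix.one_mul, pow_one, neg_one_smul]
  | succ m ih =>
      rw [oprod_succ, ih, ML hs (m+1), Matrix.smul_mul, Matrix.mul_neg,
        ← Matrix.mul_assoc, Matrix.nonsing_inv_mul _ (aU hs (m+1)), Matrix.one_mul,
        ← neg_one_smul ℂ ((aseq q s (m+2))⁻¹), smul_smul, ← pow_succ]

lemma prodQ1 (m : ℕ) :
    oprod (fun j => (qEven q s j)⁻¹ * qOdd q s j) m = ((-1:ℂ)^(m+1)) • aseq q s (m+1) := by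
  induction m with
  | zero =>
      rw [oprod_zero, EO1 hs 0]
      show -((1 : Mq q)⁻¹ * _) = _
      have h1 : (1 : Mq q)⁻¹ = 1 := Matrix.inv_eq_right_inv (by rw [Matrix.one_mul])
      rw [h1, Matrix.one_mul, pow_one, neg_one_smul]
  | succ m ih =>
      rw [oprod_succ, ih, EO1 hs (m+1), Matrix.smul_mul, Matrix.mul_neg,
        ← Matrix.mul_assoc, Matrix.mul_nonsing_inv _ (aU hs (m+1)), Matrix.one_mul,
        ← neg_one_smul ℂ (aseq q s (m+2)), smul_smul, ← pow_succ]

lemma prodQ2 (m : ℕ) :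
    oprod (fun j => qEven q s j * (qOdd q s j)⁻¹) m =
      ((-1:ℂ)^(m+1)) • ((aseq q s (m+1))ᴴ)⁻¹ := by
  induction m with
  | zero =>
      rw [oprod_zero, EO2 hs 0]
      show -((1 : Mq q)ᴴ * _) = _
      rw [Matrix.conjTranspose_one, Matrix.one_mul, pow_one, neg_one_smul]
  | succ m ih =>
      rw [oprod_succ, ih, EO2 hs (m+1), Matrix.smul_mul, Matrix.mul_neg,
        ← Matrix.mul_assoc, Matrix.nonsing_inv_mul _ (aHU hs (m+1)), Matrix.one_mul,
        ← neg_one_smul ℂ (((aseq q s (m+2))ᴴ)⁻¹), smul_smul, ← pow_succ]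

end Tele

lemma qpar_even {q : ℕ} (s : ℕ → Mq q) (j : ℕ) : qpar q s (2*j) = qEven q s j := by
  unfold qpar
  rw [if_pos (by omega : (2*j) % 2 = 0), show (2*j)/2 = j by omega]

lemma qpar_odd {q : ℕ} (s : ℕ → Mq q) (j : ℕ) : qpar q s (2*j+1) = qOdd q s j := by
  unfold qpar
  rw [if_neg (by omega : ¬ (2*j+1) % 2 = 0), show (2*j+1)/2 = j by omega]

end StmtAux
/-- Products of Stieltjes parameters versus products of Dyukarev–Stieltjes parameters. -/
theorem stmt6 (q : ℕ) (hq : 1 ≤ q) (s : ℕ → Mq q) (hs : IsStieltjesPD q s) (m : ℕ) :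
    oprod (fun j => (qpar q s (2 * j))⁻¹ * qpar q s (2 * j + 1)) m =
        (oprod (fun j => DSM q s j * DSL q s j) m)⁻¹ ∧
      oprod (fun j => qpar q s (2 * j) * (qpar q s (2 * j + 1))⁻¹) m =
        (oprod (fun j => DSM q s j * DSL q s j) m)ᴴ := by
  classical
  have hA := StmtAux.aU hs (m+1)
  constructor
  · have h1 : (fun j => (qpar q s (2*j))⁻¹ * qpar q s (2*j+1)) =
        fun j => (qEven q s j)⁻¹ * qOdd q s j := by
      funext j
      rw [StmtAux.qpar_even, StmtAux.qpar_odd]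
    rw [h1, StmtAux.prodQ1 hs m, StmtAux.prodML hs m,
      StmtAux.inv_negOnePow_smul _ _ (Matrix.isUnit_nonsing_inv_det _ hA),
      Matrix.nonsing_inv_nonsing_inv _ hA]
  · have h2 : (fun j => qpar q s (2*j) * (qpar q s (2*j+1))⁻¹) =
        fun j => qEven q s j * (qOdd q s j)⁻¹ := by
      funext j
      rw [StmtAux.qpar_even, StmtAux.qpar_odd]
    rw [h2, StmtAux.prodQ2 hs m, StmtAux.prodML hs m, Matrix.conjTranspose_smul,
      Matrix.conjTranspose_nonsing_inv]
    congr 1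
    simp

end
end

section
/- Let q ≥ 1 be an integer and let (s_j)_{j=0}^∞ be a Stieltjes positive definite sequence of complex q×q matrices. Then for all k, n ∈ ℕ₀ and all z ∈ ℂ: 𝒬_{2n}(z) · 𝕃_k^{(2n+1)} = 𝕄_{k+n+1}(z) · 𝒬_{2n}(z), 𝒬_{2n}(z) · 𝕄_k^{(2n+1)}(z) = 𝕃_{k+n} · 𝒬_{2n}(z), 𝒬_{2n+1}(z) · 𝕃_k^{(2n+2)} = 𝕃_{k+n+1} · 𝒬_{2n+1}(z), and 𝒬_{2n+1}(z) · 𝕄_k^{(2n+2)}(z) = 𝕄_{k+n+1}(z) · 𝒬_{2n+1}(z). -/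
open Matrix
open scoped ComplexOrder

noncomputable section

/-! ### Auxiliary development -/

namespace StL

open Finset

variable {q : ℕ}

/-- A block matrix given by an `ℕ`-indexed family of `q × q` blocks. -/
def blk (q : ℕ) (W : ℕ → ℕ → Mq q) (n : ℕ) :
    Matrix (Fin (n + 1) × Fin q) (Fin (n + 1) × Fin q) ℂ :=
  Matrix.of fun p r => W (p.1 : ℕ) (r.1 : ℕ) p.2 r.2

/-- Block lower-triangular Toeplitz matrix. -/
def toep (q : ℕ) (f : ℕ → Mq q) (n : ℕ) :
    Matrix (Fin (n + 1) × Fin q) (Fin (n + 1) × Fin q) ℂ :=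
  blk q (fun j k => if k ≤ j then f (j - k) else 0) n

/-- Block column. -/
def bcol (q : ℕ) (c : ℕ → Mq q) (n : ℕ) : Matrix (Fin (n + 1) × Fin q) (Fin q) ℂ :=
  Matrix.of fun p b => c (p.1 : ℕ) p.2 b

/-- Block row. -/
def brow (q : ℕ) (c : ℕ → Mq q) (n : ℕ) : Matrix (Fin q) (Fin (n + 1) × Fin q) ℂ :=
  Matrix.of fun a p => c (p.1 : ℕ) a p.2

lemma blk_congr {W W' : ℕ → ℕ → Mq q} {n : ℕ}
    (h : ∀ j k, j ≤ n → k ≤ n → W j k = W' j k) : blk q W n = blk q W' n := by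
  ext ⟨pj, pa⟩ ⟨rj, ra⟩
  simp only [blk, Matrix.of_apply]
  rw [h _ _ (Nat.lt_succ_iff.mp pj.isLt) (Nat.lt_succ_iff.mp rj.isLt)]

lemma bcol_congr {c c' : ℕ → Mq q} {n : ℕ}
    (h : ∀ j, j ≤ n → c j = c' j) : bcol q c n = bcol q c' n := by
  ext ⟨pj, pa⟩ b
  simp only [bcol, Matrix.of_apply]
  rw [h _ (Nat.lt_succ_iff.mp pj.isLt)]

lemma blk_mul_blk (W V : ℕ → ℕ → Mq q) (n : ℕ) :
    blk q W n * blk q V n = blk q (fun j k => ∑ a ∈ range (n + 1), W j a * V a k) n := by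
  ext ⟨pj, pa⟩ ⟨rj, ra⟩
  rw [Matrix.mul_apply]
  show (∑ x : Fin (n+1) × Fin q, W pj x.1 pa x.2 * V x.1 rj x.2 ra) = _
  rw [Fintype.sum_prod_type]
  show (∑ a : Fin (n+1), ∑ b : Fin q, W pj a pa b * V a rj b ra) = _
  have h1 : ∀ a : Fin (n+1), (∑ b : Fin q, W pj a pa b * V a rj b ra)
      = (W pj a * V a rj) pa ra := fun a => (Matrix.mul_apply).symm
  simp_rw [h1]
  rw [Fin.sum_univ_eq_sum_range (fun a => (W (pj:ℕ) a * V a (rj:ℕ)) pa ra) (n+1)]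
  simp [blk, Matrix.sum_apply]

lemma blk_mul_bcol (W : ℕ → ℕ → Mq q) (c : ℕ → Mq q) (n : ℕ) :
    blk q W n * bcol q c n = bcol q (fun j => ∑ a ∈ range (n + 1), W j a * c a) n := by
  ext ⟨pj, pa⟩ b
  rw [Matrix.mul_apply]
  show (∑ x : Fin (n+1) × Fin q, W pj x.1 pa x.2 * c x.1 x.2 b) = _
  rw [Fintype.sum_prod_type]
  have h1 : ∀ a : Fin (n+1), (∑ g : Fin q, W pj a pa g * c a g b)
      = (W pj a * c a) pa b := fun a => (Matrix.mul_apply).symm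
  simp_rw [h1]
  rw [Fin.sum_univ_eq_sum_range (fun a => (W (pj:ℕ) a * c a) pa b) (n+1)]
  simp [bcol, Matrix.sum_apply]

lemma bcol_mul_brow (c d : ℕ → Mq q) (n : ℕ) :
    bcol q c n * brow q d n = blk q (fun j k => c j * d k) n := by
  ext ⟨pj, pa⟩ ⟨rj, ra⟩
  rw [Matrix.mul_apply]
  exact (Matrix.mul_apply).symm

lemma bcol_mul_right (c : ℕ → Mq q) (n : ℕ) (T : Mq q) :
    bcol q c n * T = bcol q (fun m => c m * T) n := by
  ext ⟨pj, pa⟩ b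
  rw [Matrix.mul_apply]
  exact (Matrix.mul_apply).symm

lemma blk_conjT (W : ℕ → ℕ → Mq q) (n : ℕ) :
    (blk q W n)ᴴ = blk q (fun j k => (W k j)ᴴ) n := by
  ext ⟨pj, pa⟩ ⟨rj, ra⟩
  simp [blk, Matrix.conjTranspose_apply]

lemma bcol_conjT (c : ℕ → Mq q) (n : ℕ) :
    (bcol q c n)ᴴ = brow q (fun m => (c m)ᴴ) n := by
  ext a ⟨pj, pa⟩
  simp [bcol, brow, Matrix.conjTranspose_apply]

lemma brow_conjT (c : ℕ → Mq q) (n : ℕ) :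
    (brow q c n)ᴴ = bcol q (fun m => (c m)ᴴ) n := by
  ext ⟨pj, pa⟩ a
  simp [bcol, brow, Matrix.conjTranspose_apply]

lemma toep_conjT (f : ℕ → Mq q) (n : ℕ) :
    (toep q f n)ᴴ = blk q (fun j k => if j ≤ k then (f (k - j))ᴴ else 0) n := by
  rw [toep, blk_conjT]
  exact blk_congr fun j k _ _ => by split_ifs <;> simp

lemma blk_delta (n : ℕ) :
    blk q (fun j k => if j = k then (1 : Mq q) else 0) n = 1 := by
  ext ⟨pj, pa⟩ ⟨rj, ra⟩
  simp only [blk, Matrix.of_apply]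
  by_cases h : (pj : ℕ) = (rj : ℕ)
  · have : pj = rj := Fin.ext h
    subst this
    simp [Matrix.one_apply, Prod.ext_iff]
  · rw [if_neg h]
    have : ¬((pj, pa) = (rj, ra)) := by
      simp only [Prod.mk.injEq, not_and]
      intro hc
      exact absurd (congrArg Fin.val hc) h
    simp [Matrix.one_apply, this]

lemma filter_le_range {n j : ℕ} (hj : j ≤ n) :
    (range (n + 1)).filter (fun a => a ≤ j) = range (j + 1) := by
  ext a
  simp only [mem_filter, mem_range]
  omega

lemma sum_cut_left {R : Type*} [NonUnitalNonAssocSemiring R] {n j : ℕ} (hj : j ≤ n)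
    (F G : ℕ → R) :
    ∑ a ∈ range (n + 1), (if a ≤ j then F a else 0) * G a = ∑ a ∈ range (j + 1), F a * G a := by
  have h1 : ∀ a, (if a ≤ j then F a else 0) * G a = if a ≤ j then F a * G a else 0 :=
    fun a => by split_ifs <;> simp
  simp_rw [h1]
  rw [← Finset.sum_filter, filter_le_range hj]

lemma sum_cut_right {R : Type*} [NonUnitalNonAssocSemiring R] {n j : ℕ} (hj : j ≤ n)
    (F G : ℕ → R) :
    ∑ a ∈ range (n + 1), F a * (if a ≤ j then G a else 0) = ∑ a ∈ range (j + 1), F a * G a := by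
  have h1 : ∀ a, F a * (if a ≤ j then G a else 0) = if a ≤ j then F a * G a else 0 :=
    fun a => by split_ifs <;> simp
  simp_rw [h1]
  rw [← Finset.sum_filter, filter_le_range hj]

lemma toep_mul_toep (f g : ℕ → Mq q) (n : ℕ) :
    toep q f n * toep q g n
      = toep q (fun m => ∑ l ∈ range (m + 1), f (m - l) * g l) n := by
  rw [toep, toep, toep, blk_mul_blk]
  apply blk_congr
  intro j k hj _
  have h1 : ∀ a, (if a ≤ j then f (j - a) else 0) * (if k ≤ a then g (a - k) else 0)
      = if k ≤ a ∧ a ≤ j then f (j - a) * g (a - k) else 0 := fun a => by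
    split_ifs with h1 h2 h3 h4 <;> simp_all
  simp_rw [h1]
  rw [← Finset.sum_filter]
  have h2 : (range (n + 1)).filter (fun a => k ≤ a ∧ a ≤ j) = Finset.Icc k j := by
    ext a
    simp only [mem_filter, mem_range, Finset.mem_Icc]
    omega
  rw [h2]
  by_cases hkj : k ≤ j
  · rw [if_pos hkj, ← Finset.Ico_add_one_right_eq_Icc, Finset.sum_Ico_eq_sum_range]
    have h3 : j + 1 - k = j - k + 1 := by omega
    rw [h3]
    apply Finset.sum_congr rfl
    intro l hl
    have e1 : j - (k + l) = j - k - l := by omega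
    have e2 : k + l - k = l := by omega
    rw [e1, e2]
  · rw [if_neg hkj, Finset.Icc_eq_empty (by omega), Finset.sum_empty]

def dseq (q : ℕ) : ℕ → Mq q := fun m => if m = 0 then 1 else 0

lemma toep_congr {f h : ℕ → Mq q} {n : ℕ} (hfh : ∀ m, m ≤ n → f m = h m) :
    toep q f n = toep q h n := by
  rw [toep, toep]
  apply blk_congr
  intro j k hj _
  split_ifs with hc
  · rw [hfh _ (by omega)]
  · rfl

lemma toep_dseq (n : ℕ) : toep q (dseq q) n = 1 := by
  rw [← blk_delta n, toep]
  apply blk_congr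
  intro j k _ _
  by_cases h : k ≤ j
  · rw [if_pos h]
    by_cases h2 : j = k
    · simp [dseq, h2]
    · have : ¬(j - k = 0) := by omega
      simp [dseq, this, h2]
  · rw [if_neg h]
    have : ¬(j = k) := by omega
    simp [this]

lemma toep_entry_eq {f h : ℕ → Mq q} {n : ℕ} (heq : toep q f n = toep q h n)
    (m : ℕ) (hm : m ≤ n) : f m = h m := by
  ext a b
  have h2 := congrFun (congrFun heq (⟨m, by omega⟩, a)) ((⟨0, by omega⟩ : Fin (n+1)), b)
  simpa [toep, blk] using h2

lemma toep_mul_blk (f : ℕ → Mq q) (W : ℕ → ℕ → Mq q) (n : ℕ) :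
    toep q f n * blk q W n
      = blk q (fun j k => ∑ a ∈ range (j + 1), f (j - a) * W a k) n := by
  rw [toep, blk_mul_blk]
  apply blk_congr
  intro j k hj _
  exact sum_cut_left hj (fun a => f (j - a)) (fun a => W a k)

lemma blk_mul_toepT (W : ℕ → ℕ → Mq q) (f : ℕ → Mq q) (n : ℕ) :
    blk q W n * (toep q f n)ᴴ
      = blk q (fun j k => ∑ b ∈ range (k + 1), W j b * (f (k - b))ᴴ) n := by
  rw [toep_conjT, blk_mul_blk]
  apply blk_congr
  intro j k _ hk
  exact sum_cut_right hk (fun b => W j b) (fun b => (f (k - b))ᴴ)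

lemma toep_mul_bcol (f c : ℕ → Mq q) (n : ℕ) :
    toep q f n * bcol q c n
      = bcol q (fun j => ∑ a ∈ range (j + 1), f (j - a) * c a) n := by
  rw [toep, blk_mul_bcol]
  apply bcol_congr
  intro j hj
  exact sum_cut_left hj (fun a => f (j - a)) c

section Seq

variable (q : ℕ) (s : ℕ → Mq q)

lemma recip_zero : reciprocal q s 0 = (s 0)⁻¹ := by rw [reciprocal]

lemma recip_succ (j : ℕ) :
    reciprocal q s (j + 1)
      = -(s 0)⁻¹ * ∑ l ∈ range (j + 1), s (j + 1 - l) * reciprocal q s l := by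
  rw [reciprocal]
  congr 1
  exact Finset.sum_attach (range (j + 1)) (fun l => s (j + 1 - l) * reciprocal q s l)

lemma conv_left (h0 : IsUnit (s 0).det) (j : ℕ) :
    ∑ l ∈ range (j + 2), s (j + 1 - l) * reciprocal q s l = 0 := by
  rw [Finset.sum_range_succ, Nat.sub_self, recip_succ, neg_mul, mul_neg, ← Matrix.mul_assoc,
    Matrix.mul_nonsing_inv _ h0, Matrix.one_mul]
  exact add_neg_cancel _

lemma conv_zero (h0 : IsUnit (s 0).det) : s 0 * reciprocal q s 0 = 1 := by
  rw [recip_zero]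
  exact Matrix.mul_nonsing_inv _ h0

lemma toep_sg (h0 : IsUnit (s 0).det) (n : ℕ) :
    toep q s n * toep q (reciprocal q s) n = 1 := by
  rw [toep_mul_toep, ← toep_dseq n]
  apply toep_congr
  intro m _
  match m with
  | 0 => simpa [dseq] using conv_zero q s h0
  | m + 1 =>
    have h := conv_left q s h0 m
    simp only [dseq]
    rw [if_neg (Nat.succ_ne_zero m)]
    exact h

lemma toep_gs (h0 : IsUnit (s 0).det) (n : ℕ) :
    toep q (reciprocal q s) n * toep q s n = 1 :=
  mul_eq_one_comm.mp (toep_sg q s h0 n)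

lemma conv_right (h0 : IsUnit (s 0).det) (j : ℕ) :
    ∑ l ∈ range (j + 2), reciprocal q s (j + 1 - l) * s l = 0 := by
  have h := toep_gs q s h0 (j + 1)
  rw [toep_mul_toep, ← toep_dseq (j + 1)] at h
  have h2 := toep_entry_eq h (j + 1) le_rfl
  simpa [dseq] using h2

lemma conv_right_zero (h0 : IsUnit (s 0).det) : reciprocal q s 0 * s 0 = 1 := by
  rw [recip_zero]
  exact Matrix.nonsing_inv_mul _ h0

lemma crossL (h0 : IsUnit (s 0).det) (p : ℕ) :
    ∑ a ∈ range (p + 1), reciprocal q s (p - a) * s (a + 1)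
      = -(reciprocal q s (p + 1) * s 0) := by
  have h := conv_right q s h0 p
  rw [Finset.sum_range_succ'] at h
  have e : ∀ l, p + 1 - (l + 1) = p - l := fun l => by omega
  simp only [e, Nat.sub_zero] at h
  exact eq_neg_of_add_eq_zero_left h

lemma crossR (h0 : IsUnit (s 0).det) (k : ℕ) :
    ∑ b ∈ range (k + 1), s (b + 1) * reciprocal q s (k - b)
      = -(s 0 * reciprocal q s (k + 1)) := by
  have h := conv_left q s h0 k
  rw [Finset.sum_range_succ, Nat.sub_self] at h
  have h2 : ∑ l ∈ range (k + 1), s (k + 1 - l) * reciprocal q s l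
      = ∑ b ∈ range (k + 1), s (b + 1) * reciprocal q s (k - b) := by
    rw [← Finset.sum_range_reflect]
    apply Finset.sum_congr rfl
    intro b hb
    have hb' : b < k + 1 := Finset.mem_range.mp hb
    have e1 : k + 1 - (k + 1 - 1 - b) = b + 1 := by omega
    have e2 : k + 1 - 1 - b = k - b := by omega
    rw [e1, e2]
  rw [h2] at h
  exact eq_neg_of_add_eq_zero_left h

lemma recip_herm (h0 : IsUnit (s 0).det) (hh : ∀ m, (s m)ᴴ = s m) :
    ∀ m, (reciprocal q s m)ᴴ = reciprocal q s m := by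
  intro m
  induction m using Nat.strong_induction_on with
  | _ m ih =>
    match m with
    | 0 =>
      rw [recip_zero, Matrix.conjTranspose_nonsing_inv, hh]
    | j + 1 =>
      have hA := congrArg (fun M => Mᴴ) (conv_left q s h0 j)
      simp only [Matrix.conjTranspose_sum, Matrix.conjTranspose_mul, hh,
        Matrix.conjTranspose_zero] at hA
      have hB : ∑ l ∈ range (j + 2), reciprocal q s l * s (j + 1 - l) = 0 := by
        have h := conv_right q s h0 j
        rw [← Finset.sum_range_reflect] at h
        have e : ∀ l ∈ range (j + 2),
            reciprocal q s (j + 1 - (j + 2 - 1 - l)) * s (j + 2 - 1 - l)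
              = reciprocal q s l * s (j + 1 - l) := by
          intro l hl
          have hl' : l < j + 2 := Finset.mem_range.mp hl
          have e1 : j + 2 - 1 - l = j + 1 - l := by omega
          have e2 : j + 1 - (j + 1 - l) = l := by omega
          rw [e1, e2]
        rw [Finset.sum_congr rfl e] at h
        exact h
      rw [Finset.sum_range_succ, Nat.sub_self] at hA hB
      have hC : ∑ l ∈ range (j + 1), (reciprocal q s l)ᴴ * s (j + 1 - l)
          = ∑ l ∈ range (j + 1), reciprocal q s l * s (j + 1 - l) := by
        apply Finset.sum_congr rfl
        intro l hl
        have hl' : l < j + 1 := Finset.mem_range.mp hl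
        rw [ih l (by omega)]
      rw [hC] at hA
      have hD : (reciprocal q s (j + 1))ᴴ * s 0 = reciprocal q s (j + 1) * s 0 :=
        add_left_cancel (hA.trans hB.symm)
      have := congrArg (fun M => M * (s 0)⁻¹) hD
      simpa [Matrix.mul_assoc, Matrix.mul_nonsing_inv _ h0] using this

end Seq


section FSums

variable (q : ℕ) (s : ℕ → Mq q)

/-- `F(p,k) = ∑∑ g_{p-a} s_{a+b+1} g_{k-b}`. -/
def Fsum (p k : ℕ) : Mq q :=
  ∑ a ∈ range (p + 1), ∑ b ∈ range (k + 1),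
    reciprocal q s (p - a) * s (a + b + 1) * reciprocal q s (k - b)

/-- `G2(p,k) = ∑∑ g_{p-a} s_{a+b+2} g_{k-b}`. -/
def G2 (p k : ℕ) : Mq q :=
  ∑ a ∈ range (p + 1), ∑ b ∈ range (k + 1),
    reciprocal q s (p - a) * s (a + b + 2) * reciprocal q s (k - b)

lemma Fsum_zero (h0 : IsUnit (s 0).det) (p : ℕ) :
    Fsum q s p 0 = -reciprocal q s (p + 1) := by
  rw [Fsum]
  have e : ∀ a ∈ range (p + 1),
      (∑ b ∈ range (0 + 1),
        reciprocal q s (p - a) * s (a + b + 1) * reciprocal q s (0 - b))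
      = reciprocal q s (p - a) * s (a + 1) * (s 0)⁻¹ := by
    intro a _
    rw [Finset.sum_range_one, recip_zero]
  rw [Finset.sum_congr rfl e, ← Finset.sum_mul, crossL q s h0 p, neg_mul,
    Matrix.mul_nonsing_inv_cancel_right _ _ h0]

lemma Fsum_succ_right (h0 : IsUnit (s 0).det) (p k : ℕ) :
    Fsum q s p (k + 1)
      = G2 q s p k - reciprocal q s (p + 1) * s 0 * reciprocal q s (k + 1) := by
  rw [Fsum, G2]
  have e : ∀ a ∈ range (p + 1),
      (∑ b ∈ range (k + 1 + 1),
        reciprocal q s (p - a) * s (a + b + 1) * reciprocal q s (k + 1 - b))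
      = (∑ b ∈ range (k + 1),
          reciprocal q s (p - a) * s (a + b + 2) * reciprocal q s (k - b))
        + reciprocal q s (p - a) * s (a + 1) * reciprocal q s (k + 1) := by
    intro a _
    rw [Finset.sum_range_succ']
    congr 1
    apply Finset.sum_congr rfl
    intro b _
    have e1 : a + (b + 1) + 1 = a + b + 2 := by omega
    have e2 : k + 1 - (b + 1) = k - b := by omega
    rw [e1, e2]
  rw [Finset.sum_congr rfl e, Finset.sum_add_distrib, ← Finset.sum_mul, crossL q s h0 p,
    neg_mul, sub_eq_add_neg]

lemma Fsum_succ_left (h0 : IsUnit (s 0).det) (p k : ℕ) :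
    Fsum q s (p + 1) k
      = G2 q s p k - reciprocal q s (p + 1) * s 0 * reciprocal q s (k + 1) := by
  rw [Fsum, G2, Finset.sum_range_succ']
  have h1 : (∑ a ∈ range (p + 1), ∑ b ∈ range (k + 1),
        reciprocal q s (p + 1 - (a + 1)) * s (a + 1 + b + 1) * reciprocal q s (k - b))
      = ∑ a ∈ range (p + 1), ∑ b ∈ range (k + 1),
        reciprocal q s (p - a) * s (a + b + 2) * reciprocal q s (k - b) := by
    apply Finset.sum_congr rfl
    intro a _
    apply Finset.sum_congr rfl
    intro b _
    have e1 : p + 1 - (a + 1) = p - a := by omega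
    have e2 : a + 1 + b + 1 = a + b + 2 := by omega
    rw [e1, e2]
  have h2 : (∑ b ∈ range (k + 1),
        reciprocal q s (p + 1 - 0) * s (0 + b + 1) * reciprocal q s (k - b))
      = -(reciprocal q s (p + 1) * s 0 * reciprocal q s (k + 1)) := by
    have e : ∀ b ∈ range (k + 1),
        reciprocal q s (p + 1 - 0) * s (0 + b + 1) * reciprocal q s (k - b)
          = reciprocal q s (p + 1) * (s (b + 1) * reciprocal q s (k - b)) := by
      intro b _
      have e1 : 0 + b + 1 = b + 1 := by omega
      rw [Nat.sub_zero, e1, Matrix.mul_assoc]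
    rw [Finset.sum_congr rfl e, ← Finset.mul_sum, crossR q s h0 k, mul_neg,
      ← Matrix.mul_assoc]
  rw [h1, h2, sub_eq_add_neg]

lemma Fsum_eq (h0 : IsUnit (s 0).det) : ∀ k p, Fsum q s p k = -reciprocal q s (p + k + 1) := by
  intro k
  induction k with
  | zero => exact fun p => Fsum_zero q s h0 p
  | succ k ih =>
    intro p
    have h1 := Fsum_succ_right q s h0 p k
    have h2 := Fsum_succ_left q s h0 p k
    have h3 : Fsum q s p (k + 1) = Fsum q s (p + 1) k := by rw [h1, h2]
    rw [h3, ih (p + 1)]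
    have e : p + 1 + k + 1 = p + (k + 1) + 1 := by omega
    rw [e]

lemma G2_eq (h0 : IsUnit (s 0).det) (p k : ℕ) :
    G2 q s p k
      = -reciprocal q s (p + k + 2)
        + reciprocal q s (p + 1) * s 0 * reciprocal q s (k + 1) := by
  have h := Fsum_succ_left q s h0 p k
  rw [Fsum_eq q s h0 k (p + 1)] at h
  have e : p + 1 + k + 1 = p + k + 2 := by omega
  rw [e] at h
  exact (sub_eq_iff_eq_add.mp h.symm).trans (by abel)

end FSums

section TVals

variable (q : ℕ) (s : ℕ → Mq q)

lemma kat1_apply (j : ℕ) :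
    katetov1 q s j = -(s 0) * reciprocal q s (j + 1) * s 0 := rfl

lemma t_zero (h0 : IsUnit (s 0).det) : katetov1 q s 0 = s 1 := by
  have h := conv_left q s h0 0
  rw [show (0:ℕ) + 2 = 2 from rfl, Finset.sum_range_succ, Finset.sum_range_one] at h
  simp only [Nat.sub_zero, Nat.sub_self, Nat.zero_add, Nat.add_sub_cancel] at h
  have h2 : s 0 * reciprocal q s 1 = -(s 1 * (s 0)⁻¹) := by
    rw [recip_zero] at h
    linear_combination (norm := abel) h
  calc katetov1 q s 0 = -(s 0) * reciprocal q s 1 * s 0 := rfl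
    _ = -(s 0 * reciprocal q s 1) * s 0 := by rw [neg_mul]
    _ = s 1 * (s 0)⁻¹ * s 0 := by rw [h2, neg_neg]
    _ = s 1 := Matrix.nonsing_inv_mul_cancel_right _ _ h0

lemma t_one (h0 : IsUnit (s 0).det) :
    katetov1 q s 1 = s 2 - s 1 * (s 0)⁻¹ * s 1 := by
  have h := conv_left q s h0 1
  rw [show (1:ℕ) + 2 = 3 from rfl, Finset.sum_range_succ, Finset.sum_range_succ,
    Finset.sum_range_one] at h
  have hr : s 0 * reciprocal q s 2 = -(s 2 * reciprocal q s 0 + s 1 * reciprocal q s 1) := by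
    norm_num at h
    linear_combination (norm := abel) h
  have hg1 : reciprocal q s 1 * s 0 = -((s 0)⁻¹ * s 1) := by
    have h2 := conv_right q s h0 0
    rw [show (0:ℕ) + 2 = 2 from rfl, Finset.sum_range_succ, Finset.sum_range_one] at h2
    norm_num at h2
    rw [recip_zero] at h2
    linear_combination (norm := abel) h2
  calc katetov1 q s 1 = -(s 0) * reciprocal q s 2 * s 0 := rfl
    _ = -(s 0 * reciprocal q s 2) * s 0 := by rw [neg_mul]
    _ = (s 2 * reciprocal q s 0 + s 1 * reciprocal q s 1) * s 0 := by rw [hr, neg_neg]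
    _ = s 2 * reciprocal q s 0 * s 0 + s 1 * (reciprocal q s 1 * s 0) := by
        rw [add_mul, Matrix.mul_assoc (s 1)]
    _ = s 2 + s 1 * -((s 0)⁻¹ * s 1) := by
        rw [hg1, recip_zero, Matrix.nonsing_inv_mul_cancel_right _ _ h0]
    _ = s 2 - s 1 * (s 0)⁻¹ * s 1 := by
        rw [mul_neg, ← Matrix.mul_assoc, sub_eq_add_neg]

end TVals

section Helpers

variable {N N' : Type*} [Fintype N] [DecidableEq N] [Fintype N'] [DecidableEq N']

lemma inv_conj (M A A' : Matrix N N ℂ) (hM : IsUnit M.det)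
    (h1 : A * A' = 1) (h2 : A' * A = 1) :
    (A * M * Aᴴ)⁻¹ = A'ᴴ * M⁻¹ * A' := by
  have hAc : Aᴴ * A'ᴴ = 1 := by
    rw [← Matrix.conjTranspose_mul, h2, Matrix.conjTranspose_one]
  apply Matrix.inv_eq_right_inv
  calc A * M * Aᴴ * (A'ᴴ * M⁻¹ * A')
      = A * (M * (Aᴴ * A'ᴴ * (M⁻¹ * A'))) := by simp only [Matrix.mul_assoc]
    _ = A * (M * (M⁻¹ * A')) := by rw [hAc, Matrix.one_mul]
    _ = A * A' := by rw [Matrix.mul_nonsing_inv_cancel_left _ _ hM]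
    _ = 1 := h1

lemma posDef_conj {M A A' : Matrix N N ℂ} (hM : M.PosDef)
    (h1 : A * A' = 1) (h2 : A' * A = 1) : (A * M * Aᴴ).PosDef := by
  refine Matrix.PosDef.of_dotProduct_mulVec_pos ?_ ?_
  · show (A * M * Aᴴ)ᴴ = A * M * Aᴴ
    calc (A * M * Aᴴ)ᴴ = Aᴴᴴ * Mᴴ * Aᴴ := by
          rw [Matrix.conjTranspose_mul, Matrix.conjTranspose_mul, Matrix.mul_assoc]
      _ = A * M * Aᴴ := by rw [Matrix.conjTranspose_conjTranspose, hM.1.eq]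
  · intro x hx
    have hy : Aᴴ *ᵥ x ≠ 0 := by
      intro hy0
      apply hx
      have h3 : A'ᴴ *ᵥ (Aᴴ *ᵥ x) = x := by
        rw [Matrix.mulVec_mulVec, ← Matrix.conjTranspose_mul, h1, Matrix.conjTranspose_one,
          Matrix.one_mulVec]
      rw [hy0, Matrix.mulVec_zero] at h3
      exact h3.symm
    have hpos := hM.dotProduct_mulVec_pos hy
    have h4 : star (Aᴴ *ᵥ x) ⬝ᵥ M *ᵥ (Aᴴ *ᵥ x) = star x ⬝ᵥ (A * M * Aᴴ) *ᵥ x := by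
      rw [Matrix.star_mulVec, Matrix.conjTranspose_conjTranspose,
        Matrix.dotProduct_mulVec, Matrix.vecMul_vecMul, ← Matrix.dotProduct_mulVec,
        ← Matrix.mulVec_mulVec, ← Matrix.mulVec_mulVec, Matrix.mulVec_mulVec]
    rw [← h4]
    exact hpos

lemma posDef_submatrix_equiv (e : N' ≃ N) {M : Matrix N N ℂ} (hM : M.PosDef) :
    (M.submatrix e e).PosDef := by
  refine Matrix.PosDef.of_dotProduct_mulVec_pos ?_ ?_
  · show (M.submatrix e e)ᴴ = M.submatrix e e
    rw [Matrix.conjTranspose_submatrix, hM.1.eq]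
  · intro x hx
    have hx' : x ∘ e.symm ≠ 0 := by
      intro h
      apply hx
      funext i
      have := congrFun h (e i)
      simpa using this
    have hpos := hM.dotProduct_mulVec_pos hx'
    have h4 : star (x ∘ e.symm) ⬝ᵥ M *ᵥ (x ∘ e.symm)
        = star x ⬝ᵥ (M.submatrix e e) *ᵥ x := by
      rw [Matrix.submatrix_mulVec_equiv]
      show (∑ i, star (x (e.symm i)) * (M *ᵥ (x ∘ e.symm)) i)
        = ∑ i, star (x i) * (M *ᵥ (x ∘ e.symm)) (e i)
      rw [← Equiv.sum_comp e (fun i => star (x (e.symm i)) * (M *ᵥ (x ∘ e.symm)) i)]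
      simp
    rw [← h4]
    exact hpos

lemma posDef_of_psd_unit {M : Matrix N N ℂ} (h1 : M.PosSemidef) (h2 : IsUnit M.det) :
    M.PosDef := by
  refine Matrix.PosDef.of_dotProduct_mulVec_pos h1.1 fun x hx => ?_
  rcases lt_or_eq_of_le (h1.dotProduct_mulVec_nonneg x) with h | h
  · exact h
  · exfalso
    have h3 : M *ᵥ x = 0 := (h1.dotProduct_mulVec_zero_iff x).mp h.symm
    have h4 : M⁻¹ *ᵥ (M *ᵥ x) = x := by
      rw [Matrix.mulVec_mulVec, Matrix.nonsing_inv_mul _ h2, Matrix.one_mulVec]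
    rw [h3, Matrix.mulVec_zero] at h4
    exact hx h4.symm

end Helpers

section Fact

variable (q : ℕ) (s : ℕ → Mq q)

/-- `A_n`, block-Toeplitz of `s₀ g_m`. -/
def Amat (n : ℕ) := toep q (fun m => s 0 * reciprocal q s m) n

/-- Its inverse, block-Toeplitz of `s_m s₀⁻¹`. -/
def Bmat (n : ℕ) := toep q (fun m => s m * (s 0)⁻¹) n

lemma AB_one (h0 : IsUnit (s 0).det) (n : ℕ) : Amat q s n * Bmat q s n = 1 := by
  rw [Amat, Bmat, toep_mul_toep, ← toep_dseq n]
  apply toep_congr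
  intro m _
  have e : ∀ l ∈ range (m + 1),
      s 0 * reciprocal q s (m - l) * (s l * (s 0)⁻¹)
        = s 0 * (reciprocal q s (m - l) * s l) * (s 0)⁻¹ := by
    intro l _
    simp only [Matrix.mul_assoc]
  rw [Finset.sum_congr rfl e]
  have e2 : ∑ l ∈ range (m + 1), s 0 * (reciprocal q s (m - l) * s l) * (s 0)⁻¹
      = s 0 * (∑ l ∈ range (m + 1), reciprocal q s (m - l) * s l) * (s 0)⁻¹ := by
    rw [Finset.mul_sum, Finset.sum_mul]
  rw [e2]
  match m with
  | 0 =>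
    rw [Finset.sum_range_one, Nat.sub_zero, conv_right_zero q s h0, Matrix.mul_one,
      Matrix.mul_nonsing_inv _ h0]
    simp [dseq]
  | m + 1 =>
    rw [conv_right q s h0 m]
    simp [dseq]

lemma BA_one (h0 : IsUnit (s 0).det) (n : ℕ) : Bmat q s n * Amat q s n = 1 := by
  rw [Amat, Bmat, toep_mul_toep, ← toep_dseq n]
  apply toep_congr
  intro m _
  have e : ∀ l ∈ range (m + 1),
      s (m - l) * (s 0)⁻¹ * (s 0 * reciprocal q s l)
        = s (m - l) * reciprocal q s l := by
    intro l _
    rw [Matrix.mul_assoc, Matrix.nonsing_inv_mul_cancel_left _ _ h0]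
  rw [Finset.sum_congr rfl e]
  match m with
  | 0 =>
    rw [Finset.sum_range_one, Nat.sub_zero, conv_zero q s h0]
    simp [dseq]
  | m + 1 =>
    rw [conv_left q s h0 m]
    simp [dseq]

lemma pull_sums (Y : ℕ → Mq q) (Z : ℕ → ℕ → Mq q) (W : ℕ → Mq q) (j k : ℕ) :
    ∑ b ∈ range (k + 1), (∑ a ∈ range (j + 1), s 0 * Y a * Z a b) * (W b * s 0)
      = s 0 * (∑ a ∈ range (j + 1), ∑ b ∈ range (k + 1), Y a * Z a b * W b) * s 0 := by
  have e : ∀ b ∈ range (k + 1),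
      (∑ a ∈ range (j + 1), s 0 * Y a * Z a b) * (W b * s 0)
        = ∑ a ∈ range (j + 1), s 0 * (Y a * Z a b * W b) * s 0 := by
    intro b _
    rw [Finset.sum_mul]
    apply Finset.sum_congr rfl
    intro a _
    simp only [Matrix.mul_assoc]
  rw [Finset.sum_congr rfl e, Finset.sum_comm]
  have e2 : ∀ a ∈ range (j + 1),
      (∑ b ∈ range (k + 1), s 0 * (Y a * Z a b * W b) * s 0)
        = s 0 * (∑ b ∈ range (k + 1), Y a * Z a b * W b) * s 0 := by
    intro a _
    rw [Finset.mul_sum, Finset.sum_mul]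
  rw [Finset.sum_congr rfl e2, ← Finset.sum_mul, ← Finset.mul_sum]

lemma sg_herm (h0 : IsUnit (s 0).det) (hh : ∀ m, (s m)ᴴ = s m) (m : ℕ) :
    (s 0 * reciprocal q s m)ᴴ = reciprocal q s m * s 0 := by
  rw [Matrix.conjTranspose_mul, recip_herm q s h0 hh, hh]

lemma Hfact (h0 : IsUnit (s 0).det) (hh : ∀ m, (s m)ᴴ = s m) (n : ℕ) :
    Hmat q (katetov1 q s) n = Amat q s n * Kmat q s n * (Amat q s n)ᴴ := by
  have hK : Kmat q s n = blk q (fun a b => s (a + b + 1)) n := rfl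
  have hH : Hmat q (katetov1 q s) n = blk q (fun j k => katetov1 q s (j + k)) n := rfl
  rw [hK, hH, Amat, toep_mul_blk, blk_mul_toepT]
  symm
  apply blk_congr
  intro j k _ _
  have e : ∀ b ∈ range (k + 1),
      (∑ a ∈ range (j + 1), s 0 * reciprocal q s (j - a) * s (a + b + 1))
          * ((s 0 * reciprocal q s (k - b))ᴴ)
        = (∑ a ∈ range (j + 1), s 0 * reciprocal q s (j - a) * s (a + b + 1))
          * (reciprocal q s (k - b) * s 0) := by
    intro b _
    rw [sg_herm q s h0 hh]
  rw [Finset.sum_congr rfl e, pull_sums]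
  have e2 : (∑ a ∈ range (j + 1), ∑ b ∈ range (k + 1),
      reciprocal q s (j - a) * s (a + b + 1) * reciprocal q s (k - b)) = Fsum q s j k := rfl
  rw [e2, Fsum_eq q s h0 k j, kat1_apply, mul_neg, neg_mul, neg_mul, neg_mul]

/-- The Schur-complement kernel `Σ_n`. -/
def SigM (n : ℕ) :=
  blk q (fun a b => s (a + b + 2) - s (a + 1) * (s 0)⁻¹ * s (b + 1)) n

lemma Kfact (h0 : IsUnit (s 0).det) (hh : ∀ m, (s m)ᴴ = s m) (n : ℕ) :
    Kmat q (katetov1 q s) n = Amat q s n * SigM q s n * (Amat q s n)ᴴ := by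
  have hK : Kmat q (katetov1 q s) n
      = blk q (fun j k => katetov1 q s (j + k + 1)) n := rfl
  rw [hK, SigM, Amat, toep_mul_blk, blk_mul_toepT]
  symm
  apply blk_congr
  intro j k _ _
  have e : ∀ b ∈ range (k + 1),
      (∑ a ∈ range (j + 1), s 0 * reciprocal q s (j - a)
          * (s (a + b + 2) - s (a + 1) * (s 0)⁻¹ * s (b + 1)))
          * ((s 0 * reciprocal q s (k - b))ᴴ)
        = (∑ a ∈ range (j + 1), s 0 * reciprocal q s (j - a)
          * (s (a + b + 2) - s (a + 1) * (s 0)⁻¹ * s (b + 1)))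
          * (reciprocal q s (k - b) * s 0) := by
    intro b _
    rw [sg_herm q s h0 hh]
  rw [Finset.sum_congr rfl e, pull_sums]
  have hsplit : (∑ a ∈ range (j + 1), ∑ b ∈ range (k + 1),
      reciprocal q s (j - a) * (s (a + b + 2) - s (a + 1) * (s 0)⁻¹ * s (b + 1))
        * reciprocal q s (k - b))
      = G2 q s j k
        - ∑ a ∈ range (j + 1), ∑ b ∈ range (k + 1),
            reciprocal q s (j - a) * (s (a + 1) * (s 0)⁻¹ * s (b + 1))
              * reciprocal q s (k - b) := by
    rw [G2, ← Finset.sum_sub_distrib]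
    apply Finset.sum_congr rfl
    intro a _
    rw [← Finset.sum_sub_distrib]
    apply Finset.sum_congr rfl
    intro b _
    rw [mul_sub, sub_mul]
  have hsecond : (∑ a ∈ range (j + 1), ∑ b ∈ range (k + 1),
      reciprocal q s (j - a) * (s (a + 1) * (s 0)⁻¹ * s (b + 1)) * reciprocal q s (k - b))
      = reciprocal q s (j + 1) * s 0 * reciprocal q s (k + 1) := by
    have einner : ∀ a ∈ range (j + 1),
        (∑ b ∈ range (k + 1), reciprocal q s (j - a) * (s (a + 1) * (s 0)⁻¹ * s (b + 1))
            * reciprocal q s (k - b))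
          = -(reciprocal q s (j - a) * s (a + 1) * reciprocal q s (k + 1)) := by
      intro a _
      have e1 : ∀ b ∈ range (k + 1),
          reciprocal q s (j - a) * (s (a + 1) * (s 0)⁻¹ * s (b + 1)) * reciprocal q s (k - b)
            = reciprocal q s (j - a) * s (a + 1) * (s 0)⁻¹
                * (s (b + 1) * reciprocal q s (k - b)) := by
        intro b _
        simp only [Matrix.mul_assoc]
      rw [Finset.sum_congr rfl e1, ← Finset.mul_sum, crossR q s h0 k, mul_neg]
      congr 1
      rw [Matrix.mul_assoc (reciprocal q s (j - a) * s (a + 1)),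
        Matrix.nonsing_inv_mul_cancel_left _ _ h0]
    rw [Finset.sum_congr rfl einner, Finset.sum_neg_distrib, ← Finset.sum_mul,
      crossL q s h0 j, neg_mul, neg_neg]
  rw [hsplit, hsecond, G2_eq q s h0 j k, add_sub_cancel_right, kat1_apply]
  rw [mul_neg, neg_mul, neg_mul, neg_mul]

end Fact

section Cols

variable (q : ℕ) (s : ℕ → Mq q)

lemma ycol_eq_bcol (n : ℕ) : ycol q s n = bcol q s n := rfl

lemma yt_eq (h0 : IsUnit (s 0).det) (n : ℕ) :
    ycol q (katetov1 q s) n = Amat q s n * bcol q (fun m => s (m + 1)) n := by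
  rw [ycol_eq_bcol, Amat, toep_mul_bcol]
  apply bcol_congr
  intro j _
  have e : ∀ a ∈ range (j + 1),
      s 0 * reciprocal q s (j - a) * s (a + 1)
        = s 0 * (reciprocal q s (j - a) * s (a + 1)) := by
    intro a _
    rw [Matrix.mul_assoc]
  rw [Finset.sum_congr rfl e, ← Finset.mul_sum, crossL q s h0 j, kat1_apply]
  rw [neg_mul, neg_mul, mul_neg, Matrix.mul_assoc]

lemma vcol_eq (n : ℕ) :
    vcol q n = Matrix.of (fun p b => if p = ((0 : Fin (n + 1)), b) then (1 : ℂ) else 0) := by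
  ext ⟨pj, pa⟩ b
  have h : ((pj, pa) = ((0 : Fin (n + 1)), b)) ↔ ((pj : ℕ) = 0 ∧ pa = b) := by
    simp only [Prod.ext_iff, Fin.ext_iff, Fin.val_zero]
  simp only [vcol, Matrix.of_apply, h]

lemma mul_vcol {I : Type*} [Fintype I] (n : ℕ) (X : Matrix I (Fin (n + 1) × Fin q) ℂ) :
    X * vcol q n = Matrix.of (fun p b => X p ((0 : Fin (n + 1)), b)) := by
  ext p b
  rw [Matrix.mul_apply]
  simp only [vcol_eq, Matrix.of_apply, mul_ite, mul_one, mul_zero]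
  rw [Finset.sum_ite_eq' Finset.univ ((0 : Fin (n + 1)), b) (fun r => X p r)]
  simp

lemma vconjT_mul {I : Type*} [Fintype I] (n : ℕ) (X : Matrix (Fin (n + 1) × Fin q) I ℂ) :
    (vcol q n)ᴴ * X = Matrix.of (fun a r => X ((0 : Fin (n + 1)), a) r) := by
  ext a r
  rw [Matrix.mul_apply]
  simp only [Matrix.conjTranspose_apply, vcol_eq, Matrix.of_apply]
  have e : ∀ p : Fin (n + 1) × Fin q,
      star (if p = ((0 : Fin (n + 1)), a) then (1 : ℂ) else 0) * X p r
        = if p = ((0 : Fin (n + 1)), a) then X p r else 0 := by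
    intro p
    split_ifs <;> simp
  simp_rw [e]
  rw [Finset.sum_ite_eq' Finset.univ ((0 : Fin (n + 1)), a) (fun p => X p r)]
  simp

lemma vcorner (n : ℕ) (X : Matrix (Fin (n + 1) × Fin q) (Fin (n + 1) × Fin q) ℂ) :
    (vcol q n)ᴴ * X * vcol q n
      = Matrix.of (fun a b => X ((0 : Fin (n + 1)), a) ((0 : Fin (n + 1)), b)) := by
  rw [Matrix.mul_assoc, mul_vcol, vconjT_mul]
  rfl

lemma Bv (h0 : IsUnit (s 0).det) (n : ℕ) :
    Bmat q s n * vcol q n = ycol q s n * (s 0)⁻¹ := by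
  rw [mul_vcol, ycol_eq_bcol, bcol_mul_right]
  ext ⟨pj, pa⟩ b
  simp only [Bmat, toep, blk, bcol, Matrix.of_apply, Fin.val_zero, Nat.zero_le, if_pos,
    Nat.sub_zero]
  split_ifs with hz
  · rfl
  · exact absurd (Nat.zero_le _) hz

/-- `Fin 1 × Fin q ≃ Fin q`. -/
def e0 (q : ℕ) : (Fin 1 × Fin q) ≃ Fin q where
  toFun p := p.2
  invFun c := (0, c)
  left_inv := by
    rintro ⟨a, b⟩
    have : a = 0 := Subsingleton.elim a 0
    subst this
    rfl
  right_inv c := rfl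

lemma Hmat_zero : Hmat q s 0 = (s 0).submatrix (e0 q) (e0 q) := by
  ext ⟨a, b⟩ ⟨c, d⟩
  have ha : (a : ℕ) = 0 := by omega
  have hc : (c : ℕ) = 0 := by omega
  simp [Hmat, e0, Matrix.submatrix_apply, ha, hc]

lemma Kmat_zero : Kmat q s 0 = (s 1).submatrix (e0 q) (e0 q) := by
  ext ⟨a, b⟩ ⟨c, d⟩
  have ha : (a : ℕ) = 0 := by omega
  have hc : (c : ℕ) = 0 := by omega
  simp [Kmat, e0, Matrix.submatrix_apply, ha, hc]

lemma sub_e0_e0symm (T : Mq q) :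
    (T.submatrix (e0 q) (e0 q)).submatrix (e0 q).symm (e0 q).symm = T := by
  rw [Matrix.submatrix_submatrix, Equiv.self_comp_symm, Matrix.submatrix_id_id]

lemma s_herm (hs : IsStieltjesPD q s) (m : ℕ) : (s m)ᴴ = s m := by
  have h := (hs m).1.1
  ext a b
  have h2 := congrFun (congrFun h ((⟨m, by omega⟩ : Fin (m + 1)), a))
    ((⟨0, by omega⟩ : Fin (m + 1)), b)
  simpa [Hmat, Matrix.conjTranspose_apply] using h2

lemma s0_posDef (hs : IsStieltjesPD q s) : (s 0).PosDef := by
  have h := posDef_submatrix_equiv (e0 q).symm (hs 0).1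
  rw [Hmat_zero q s, sub_e0_e0symm] at h
  exact h

lemma s1_posDef (hs : IsStieltjesPD q s) : (s 1).PosDef := by
  have h := posDef_submatrix_equiv (e0 q).symm (hs 0).2
  rw [Kmat_zero q s, sub_e0_e0symm] at h
  exact h

lemma s0_unit (hs : IsStieltjesPD q s) : IsUnit (s 0).det :=
  (Matrix.isUnit_iff_isUnit_det _).mp (s0_posDef q s hs).isUnit

lemma Hdet (hs : IsStieltjesPD q s) (n : ℕ) : IsUnit (Hmat q s n).det :=
  (Matrix.isUnit_iff_isUnit_det _).mp (hs n).1.isUnit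

lemma Kdet (hs : IsStieltjesPD q s) (n : ℕ) : IsUnit (Kmat q s n).det :=
  (Matrix.isUnit_iff_isUnit_det _).mp (hs n).2.isUnit

end Cols

section Blocks

variable (q : ℕ) (s : ℕ → Mq q)

/-- Splitting `Fin (n+2) × Fin q` as first block plus rest. -/
def eqv (n : ℕ) : (Fin q ⊕ (Fin (n + 1) × Fin q)) ≃ (Fin (n + 2) × Fin q) where
  toFun := Sum.elim (fun c => ((0 : Fin (n + 2)), c)) (fun r => (r.1.succ, r.2))
  invFun p := Fin.cases (Sum.inl p.2) (fun i => Sum.inr (i, p.2)) p.1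
  left_inv := by rintro (c | ⟨i, c⟩) <;> simp
  right_inv := by
    rintro ⟨j, c⟩
    induction j using Fin.cases with
    | zero => simp
    | succ i => simp

lemma eqv_symm_zero (n : ℕ) (a : Fin q) :
    (eqv q n).symm ((0 : Fin (n + 2)), a) = Sum.inl a := by
  simp [eqv]

lemma Hsub (n : ℕ) :
    (Hmat q s (n + 1)).submatrix (eqv q n) (eqv q n)
      = Matrix.fromBlocks (s 0) (brow q (fun m => s (m + 1)) n)
          (bcol q (fun m => s (m + 1)) n) (blk q (fun a b => s (a + b + 2)) n) := by
  ext i j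
  rcases i with c | ⟨pi, ci⟩ <;> rcases j with d | ⟨pj, cj⟩
  · simp [Hmat, eqv, Matrix.submatrix_apply]
  · simp [Hmat, eqv, brow, Matrix.submatrix_apply]
  · simp [Hmat, eqv, bcol, Matrix.submatrix_apply]
  · simp only [Matrix.submatrix_apply, eqv, Equiv.coe_fn_mk, Sum.elim_inr,
      Matrix.fromBlocks_apply₂₂, Hmat, Matrix.of_apply, blk, Fin.val_succ]
    have e : (pi : ℕ) + 1 + ((pj : ℕ) + 1) = (pi : ℕ) + (pj : ℕ) + 2 := by omega
    rw [e]

lemma SigM_sub (n : ℕ) :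
    SigM q s n
      = blk q (fun a b => s (a + b + 2)) n
        - bcol q (fun m => s (m + 1)) n * (s 0)⁻¹ * brow q (fun m => s (m + 1)) n := by
  rw [bcol_mul_right, bcol_mul_brow]
  ext ⟨pi, ci⟩ ⟨pj, cj⟩
  simp [SigM, blk, Matrix.sub_apply]

lemma bcolS_conjT (hh : ∀ m, (s m)ᴴ = s m) (n : ℕ) :
    (bcol q (fun m => s (m + 1)) n)ᴴ = brow q (fun m => s (m + 1)) n := by
  rw [bcol_conjT]
  simp only [hh]

lemma browS_conjT (hh : ∀ m, (s m)ᴴ = s m) (n : ℕ) :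
    (brow q (fun m => s (m + 1)) n)ᴴ = bcol q (fun m => s (m + 1)) n := by
  rw [brow_conjT]
  simp only [hh]

lemma fromBlocks_posDef (hs : IsStieltjesPD q s) (n : ℕ) :
    (Matrix.fromBlocks (s 0) (brow q (fun m => s (m + 1)) n)
      (bcol q (fun m => s (m + 1)) n) (blk q (fun a b => s (a + b + 2)) n)).PosDef := by
  rw [← Hsub]
  exact posDef_submatrix_equiv _ (hs (n + 1)).1

lemma SigM_det (hs : IsStieltjesPD q s) (n : ℕ) : IsUnit (SigM q s n).det := by
  haveI iA : Invertible (s 0) := Matrix.invertibleOfIsUnitDet _ (s0_unit q s hs)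
  have hdet := Matrix.det_fromBlocks₁₁ (s 0) (brow q (fun m => s (m + 1)) n)
    (bcol q (fun m => s (m + 1)) n) (blk q (fun a b => s (a + b + 2)) n)
  rw [Matrix.invOf_eq_nonsing_inv, ← SigM_sub] at hdet
  have hunit : IsUnit (Matrix.fromBlocks (s 0) (brow q (fun m => s (m + 1)) n)
      (bcol q (fun m => s (m + 1)) n) (blk q (fun a b => s (a + b + 2)) n)).det := by
    have := (fromBlocks_posDef q s hs n).isUnit
    exact (Matrix.isUnit_iff_isUnit_det _).mp this
  rw [hdet] at hunit
  exact isUnit_of_mul_isUnit_right hunit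

lemma SigM_posDef (hs : IsStieltjesPD q s) (n : ℕ) : (SigM q s n).PosDef := by
  haveI iA : Invertible (s 0) := Matrix.invertibleOfIsUnitDet _ (s0_unit q s hs)
  have hh := s_herm q s hs
  have hPSD := (fromBlocks_posDef q s hs n).posSemidef
  rw [show bcol q (fun m => s (m + 1)) n = (brow q (fun m => s (m + 1)) n)ᴴ from
    (browS_conjT q s hh n).symm] at hPSD
  rw [Matrix.PosDef.fromBlocks₁₁ _ _ (s0_posDef q s hs)] at hPSD
  rw [browS_conjT q s hh n, ← SigM_sub] at hPSD
  exact posDef_of_psd_unit hPSD (SigM_det q s hs n)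

lemma Ht_posDef (hs : IsStieltjesPD q s) (n : ℕ) :
    (Hmat q (katetov1 q s) n).PosDef := by
  have h0 := s0_unit q s hs
  rw [Hfact q s h0 (s_herm q s hs) n]
  exact posDef_conj (hs n).2 (AB_one q s h0 n) (BA_one q s h0 n)

lemma Kt_posDef (hs : IsStieltjesPD q s) (n : ℕ) :
    (Kmat q (katetov1 q s) n).PosDef := by
  have h0 := s0_unit q s hs
  rw [Kfact q s h0 (s_herm q s hs) n]
  exact posDef_conj (SigM_posDef q s hs n) (AB_one q s h0 n) (BA_one q s h0 n)

lemma spd_kat1 (hs : IsStieltjesPD q s) : IsStieltjesPD q (katetov1 q s) :=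
  fun n => ⟨Ht_posDef q s hs n, Kt_posDef q s hs n⟩

lemma vHinv (hs : IsStieltjesPD q s) (n : ℕ) :
    (vcol q (n + 1))ᴴ * (Hmat q s (n + 1))⁻¹ * vcol q (n + 1)
      = (s 0)⁻¹ + (s 0)⁻¹ * brow q (fun m => s (m + 1)) n * (SigM q s n)⁻¹
          * bcol q (fun m => s (m + 1)) n * (s 0)⁻¹ := by
  haveI iA : Invertible (s 0) := Matrix.invertibleOfIsUnitDet _ (s0_unit q s hs)
  set B := brow q (fun m => s (m + 1)) n with hB
  set C := bcol q (fun m => s (m + 1)) n with hC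
  set D := blk q (fun a b => s (a + b + 2)) n with hD
  have hSchur : D - C * ⅟(s 0) * B = SigM q s n := by
    rw [Matrix.invOf_eq_nonsing_inv, ← SigM_sub]
  haveI iS : Invertible (D - C * ⅟(s 0) * B) := by
    rw [hSchur]
    exact Matrix.invertibleOfIsUnitDet _ (SigM_det q s hs n)
  haveI iFB : Invertible (Matrix.fromBlocks (s 0) B C D) :=
    Matrix.fromBlocks₁₁Invertible (s 0) B C D
  have hinvOf := Matrix.invOf_fromBlocks₁₁_eq (s 0) B C D
  have h1 : Hmat q s (n + 1)
      = (Matrix.fromBlocks (s 0) B C D).submatrix (eqv q n).symm (eqv q n).symm := by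
    rw [← Hsub, Matrix.submatrix_submatrix, Equiv.self_comp_symm, Matrix.submatrix_id_id]
  have h2 : (Hmat q s (n + 1))⁻¹
      = ((Matrix.fromBlocks (s 0) B C D)⁻¹).submatrix (eqv q n).symm (eqv q n).symm := by
    rw [h1, Matrix.inv_submatrix_equiv]
  rw [h2, vcorner]
  ext a b
  simp only [Matrix.of_apply, Matrix.submatrix_apply, eqv_symm_zero]
  rw [← Matrix.invOf_eq_nonsing_inv, hinvOf, Matrix.fromBlocks_apply₁₁]
  have e2 : ⅟(D - C * ⅟(s 0) * B) = (SigM q s n)⁻¹ := by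
    rw [Matrix.invOf_eq_nonsing_inv, hSchur]
  rw [e2, Matrix.invOf_eq_nonsing_inv]

lemma vH0inv (hs : IsStieltjesPD q s) :
    (vcol q 0)ᴴ * (Hmat q s 0)⁻¹ * vcol q 0 = (s 0)⁻¹ := by
  have h2 : (Hmat q s 0)⁻¹ = ((s 0)⁻¹).submatrix (e0 q) (e0 q) := by
    rw [Hmat_zero, Matrix.inv_submatrix_equiv]
  rw [h2, vcorner]
  ext a b
  simp [e0, Matrix.submatrix_apply]

end Blocks

section DS

variable (q : ℕ) (s : ℕ → Mq q)

lemma conj_cancel (h0 : IsUnit (s 0).det) (X : Mq q) :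
    s 0 * ((s 0)⁻¹ * X * (s 0)⁻¹) * s 0 = X := by
  calc s 0 * ((s 0)⁻¹ * X * (s 0)⁻¹) * s 0
      = s 0 * ((s 0)⁻¹ * (X * (s 0)⁻¹)) * s 0 := by simp only [Matrix.mul_assoc]
    _ = X * (s 0)⁻¹ * s 0 := by rw [Matrix.mul_nonsing_inv_cancel_left _ _ h0]
    _ = X := Matrix.nonsing_inv_mul_cancel_right _ _ h0

lemma conj_cancel_add (h0 : IsUnit (s 0).det) (X : Mq q) :
    s 0 * ((s 0)⁻¹ + (s 0)⁻¹ * X * (s 0)⁻¹) * s 0 = s 0 + X := by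
  rw [mul_add, add_mul, Matrix.nonsing_inv_mul_cancel_right _ _ h0, conj_cancel q s h0]

lemma vHt (hs : IsStieltjesPD q s) (k : ℕ) :
    (vcol q k)ᴴ * (Hmat q (katetov1 q s) k)⁻¹ * vcol q k
      = (s 0)⁻¹ * ((ycol q s k)ᴴ * (Kmat q s k)⁻¹ * ycol q s k) * (s 0)⁻¹ := by
  have h0 := s0_unit q s hs
  have hh := s_herm q s hs
  rw [Hfact q s h0 hh k, inv_conj _ _ _ (Kdet q s hs k) (AB_one q s h0 k) (BA_one q s h0 k)]
  have e1 : (vcol q k)ᴴ * ((Bmat q s k)ᴴ * (Kmat q s k)⁻¹ * Bmat q s k) * vcol q k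
      = (Bmat q s k * vcol q k)ᴴ * (Kmat q s k)⁻¹ * (Bmat q s k * vcol q k) := by
    rw [Matrix.conjTranspose_mul]
    simp only [Matrix.mul_assoc]
  rw [e1, Bv q s h0 k, Matrix.conjTranspose_mul, Matrix.conjTranspose_nonsing_inv, hh 0]
  simp only [Matrix.mul_assoc]

lemma idII (hs : IsStieltjesPD q s) (k : ℕ) :
    DSL q s k = s 0 * DSM q (katetov1 q s) k * s 0 := by
  have h0 := s0_unit q s hs
  match k with
  | 0 =>
    show DSL q s 0 = s 0 * DSM q (katetov1 q s) 0 * s 0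
    rw [DSL, DSM, t_zero q s h0]
  | k + 1 =>
    rw [DSL, DSM, vHt q s hs (k + 1), vHt q s hs k, mul_sub, sub_mul,
      conj_cancel q s h0, conj_cancel q s h0]

lemma zcKt (hs : IsStieltjesPD q s) (k : ℕ) :
    (ycol q (katetov1 q s) k)ᴴ * (Kmat q (katetov1 q s) k)⁻¹ * ycol q (katetov1 q s) k
      = brow q (fun m => s (m + 1)) k * (SigM q s k)⁻¹ * bcol q (fun m => s (m + 1)) k := by
  have h0 := s0_unit q s hs
  have hh := s_herm q s hs
  rw [Kfact q s h0 hh k, inv_conj _ _ _ (SigM_det q s hs k) (AB_one q s h0 k) (BA_one q s h0 k),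
    yt_eq q s h0 k]
  have hc1 : (Amat q s k)ᴴ * (Bmat q s k)ᴴ = 1 := by
    rw [← Matrix.conjTranspose_mul, BA_one q s h0 k, Matrix.conjTranspose_one]
  have e1 : (Amat q s k * bcol q (fun m => s (m + 1)) k)ᴴ
        * ((Bmat q s k)ᴴ * (SigM q s k)⁻¹ * Bmat q s k)
        * (Amat q s k * bcol q (fun m => s (m + 1)) k)
      = (bcol q (fun m => s (m + 1)) k)ᴴ
        * (((Amat q s k)ᴴ * (Bmat q s k)ᴴ)
            * ((SigM q s k)⁻¹ * ((Bmat q s k * Amat q s k) * bcol q (fun m => s (m + 1)) k))) := by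
    rw [Matrix.conjTranspose_mul]
    simp only [Matrix.mul_assoc]
  rw [e1, hc1, BA_one q s h0 k, Matrix.one_mul, Matrix.one_mul, bcolS_conjT q s hh k,
    ← Matrix.mul_assoc]

lemma bcol0_eq : bcol q (fun m => s (m + 1)) 0 = (s 1).submatrix (⇑(e0 q)) id := by
  ext ⟨pj, pa⟩ b
  have h : (pj : ℕ) = 0 := by omega
  simp [bcol, e0, h, Matrix.submatrix_apply]

lemma brow0_eq : brow q (fun m => s (m + 1)) 0 = (s 1).submatrix id (⇑(e0 q)) := by
  ext a ⟨pj, pa⟩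
  have h : (pj : ℕ) = 0 := by omega
  simp [brow, e0, h, Matrix.submatrix_apply]

lemma SigM0_eq :
    SigM q s 0 = (s 2 - s 1 * (s 0)⁻¹ * s 1).submatrix (⇑(e0 q)) (⇑(e0 q)) := by
  ext ⟨pi, ci⟩ ⟨pj, cj⟩
  have h1 : (pi : ℕ) = 0 := by omega
  have h2 : (pj : ℕ) = 0 := by omega
  simp [SigM, blk, e0, h1, h2, Matrix.submatrix_apply, Matrix.sub_apply]

lemma corner0 (hs : IsStieltjesPD q s) :
    brow q (fun m => s (m + 1)) 0 * (SigM q s 0)⁻¹ * bcol q (fun m => s (m + 1)) 0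
      = s 1 * (s 2 - s 1 * (s 0)⁻¹ * s 1)⁻¹ * s 1 := by
  rw [brow0_eq, bcol0_eq, SigM0_eq, Matrix.inv_submatrix_equiv,
    Matrix.submatrix_mul_equiv, Matrix.submatrix_mul_equiv, Matrix.submatrix_id_id]

lemma vHinv' (hs : IsStieltjesPD q s) (n : ℕ) :
    (vcol q (n + 1))ᴴ * (Hmat q s (n + 1))⁻¹ * vcol q (n + 1)
      = (s 0)⁻¹ + (s 0)⁻¹
          * (brow q (fun m => s (m + 1)) n * (SigM q s n)⁻¹ * bcol q (fun m => s (m + 1)) n)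
          * (s 0)⁻¹ := by
  rw [vHinv q s hs n]
  simp only [Matrix.mul_assoc]

lemma idI (hs : IsStieltjesPD q s) (k : ℕ) :
    DSL q (katetov1 q s) k = s 0 * DSM q s (k + 1) * s 0 := by
  have h0 := s0_unit q s hs
  match k with
  | 0 =>
    show DSL q (katetov1 q s) 0 = s 0 * DSM q s 1 * s 0
    rw [DSL, DSM, t_zero q s h0, t_one q s h0]
    rw [vHinv' q s hs 0, vH0inv q s hs, mul_sub, sub_mul, conj_cancel_add q s h0,
      Matrix.nonsing_inv_mul_cancel_right _ _ h0, add_sub_cancel_left, corner0 q s hs]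
  | k + 1 =>
    rw [DSL, DSM, zcKt q s hs (k + 1), zcKt q s hs k]
    rw [vHinv' q s hs (k + 1), vHinv' q s hs k, mul_sub, sub_mul,
      conj_cancel_add q s h0, conj_cancel_add q s h0, add_sub_add_left_eq_sub]

end DS

section Steps

variable (q : ℕ)

lemma kat_succ (ℓ : ℕ) (s : ℕ → Mq q) :
    katetov q (ℓ + 1) s = katetov1 q (katetov q ℓ s) :=
  Function.iterate_succ_apply' _ _ _

lemma spd_kat (s : ℕ → Mq q) (hs : IsStieltjesPD q s) (ℓ : ℕ) :
    IsStieltjesPD q (katetov q ℓ s) := by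
  induction ℓ with
  | zero => exact hs
  | succ ℓ ih =>
    rw [kat_succ]
    exact spd_kat1 q _ ih

lemma step_a (u : ℕ → Mq q) (hu : IsStieltjesPD q u) (k : ℕ) (z : ℂ) :
    QQ0 q u 0 z * LL q (katetov1 q u) k = MM q u (k + 1) z * QQ0 q u 0 z := by
  have h0 := s0_unit q u hu
  have key : (u 0)⁻¹ * DSL q (katetov1 q u) k = DSM q u (k + 1) * u 0 := by
    rw [idI q u hu k, Matrix.mul_assoc (u 0), Matrix.nonsing_inv_mul_cancel_left _ _ h0]
  have hQ : QQ0 q u 0 z = Matrix.fromBlocks 0 (u 0) (-(z • (u 0)⁻¹)) 0 := rfl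
  rw [hQ, LL, MM, Matrix.fromBlocks_multiply, Matrix.fromBlocks_multiply]
  simp only [Matrix.mul_one, Matrix.one_mul, Matrix.mul_zero, Matrix.zero_mul,
    add_zero, zero_add, Matrix.neg_mul, smul_mul_assoc, key]

lemma step_b (u : ℕ → Mq q) (hu : IsStieltjesPD q u) (k : ℕ) (z : ℂ) :
    QQ0 q u 0 z * MM q (katetov1 q u) k z = LL q u k * QQ0 q u 0 z := by
  have h0 := s0_unit q u hu
  have key : u 0 * DSM q (katetov1 q u) k = DSL q u k * (u 0)⁻¹ := by
    rw [idII q u hu k, Matrix.mul_nonsing_inv_cancel_right _ _ h0]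
  have hQ : QQ0 q u 0 z = Matrix.fromBlocks 0 (u 0) (-(z • (u 0)⁻¹)) 0 := rfl
  rw [hQ, LL, MM, Matrix.fromBlocks_multiply, Matrix.fromBlocks_multiply]
  simp only [Matrix.mul_one, Matrix.one_mul, Matrix.mul_zero, Matrix.zero_mul,
    add_zero, zero_add, Matrix.neg_mul, smul_mul_assoc, Matrix.mul_neg, mul_smul_comm,
    smul_zero, neg_zero, key]

lemma stepA (s : ℕ → Mq q) (hs : IsStieltjesPD q s) (ℓ k : ℕ) (z : ℂ) :
    QQ0 q s ℓ z * LL q (katetov q (ℓ + 1) s) k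
      = MM q (katetov q ℓ s) (k + 1) z * QQ0 q s ℓ z := by
  have h := step_a q (katetov q ℓ s) (spd_kat q s hs ℓ) k z
  rw [kat_succ]
  exact h

lemma stepB (s : ℕ → Mq q) (hs : IsStieltjesPD q s) (ℓ k : ℕ) (z : ℂ) :
    QQ0 q s ℓ z * MM q (katetov q (ℓ + 1) s) k z
      = LL q (katetov q ℓ s) k * QQ0 q s ℓ z := by
  have h := step_b q (katetov q ℓ s) (spd_kat q s hs ℓ) k z
  rw [kat_succ]
  exact h

lemma Qprod_zero (s : ℕ → Mq q) (z : ℂ) : Qprod q s 0 z = QQ0 q s 0 z := by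
  show ((List.range 1).map fun ℓ => QQ0 q s ℓ z).prod = _
  rw [List.range_succ, List.range_zero]
  simp

lemma Qprod_succ (s : ℕ → Mq q) (m : ℕ) (z : ℂ) :
    Qprod q s (m + 1) z = Qprod q s m z * QQ0 q s (m + 1) z := by
  show ((List.range (m + 2)).map fun ℓ => QQ0 q s ℓ z).prod
      = ((List.range (m + 1)).map fun ℓ => QQ0 q s ℓ z).prod * QQ0 q s (m + 1) z
  rw [List.range_succ, List.map_append, List.prod_append]
  simp

lemma quad (s : ℕ → Mq q) (hs : IsStieltjesPD q s) (n : ℕ) :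
    (∀ k z, Qprod q s (2 * n) z * LL q (katetov q (2 * n + 1) s) k
        = MM q s (k + n + 1) z * Qprod q s (2 * n) z)
      ∧ (∀ k z, Qprod q s (2 * n) z * MM q (katetov q (2 * n + 1) s) k z
        = LL q s (k + n) * Qprod q s (2 * n) z)
      ∧ (∀ k z, Qprod q s (2 * n + 1) z * LL q (katetov q (2 * n + 2) s) k
        = LL q s (k + n + 1) * Qprod q s (2 * n + 1) z)
      ∧ (∀ k z, Qprod q s (2 * n + 1) z * MM q (katetov q (2 * n + 2) s) k z
        = MM q s (k + n + 1) z * Qprod q s (2 * n + 1) z) := by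
  induction n with
  | zero =>
    have h1 : ∀ k z, Qprod q s 0 z * LL q (katetov q 1 s) k
        = MM q s (k + 1) z * Qprod q s 0 z := by
      intro k z
      rw [Qprod_zero]
      exact stepA q s hs 0 k z
    have h2 : ∀ k z, Qprod q s 0 z * MM q (katetov q 1 s) k z
        = LL q s k * Qprod q s 0 z := by
      intro k z
      rw [Qprod_zero]
      exact stepB q s hs 0 k z
    refine ⟨fun k z => h1 k z, fun k z => h2 k z, ?_, ?_⟩
    · intro k z
      rw [Qprod_succ, Matrix.mul_assoc, stepA q s hs 1 k z, ← Matrix.mul_assoc,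
        h2 (k + 1) z, Matrix.mul_assoc]
    · intro k z
      rw [Qprod_succ, Matrix.mul_assoc, stepB q s hs 1 k z, ← Matrix.mul_assoc,
        h1 k z, Matrix.mul_assoc]
  | succ n ih =>
    obtain ⟨-, -, ih3, ih4⟩ := ih
    have h1 : ∀ k z, Qprod q s (2 * n + 2) z * LL q (katetov q (2 * n + 3) s) k
        = MM q s (k + n + 2) z * Qprod q s (2 * n + 2) z := by
      intro k z
      rw [Qprod_succ, Matrix.mul_assoc, stepA q s hs (2 * n + 2) k z, ← Matrix.mul_assoc,
        ih4 (k + 1) z, Matrix.mul_assoc]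
      have e : k + 1 + n + 1 = k + n + 2 := by omega
      rw [e]
    have h2 : ∀ k z, Qprod q s (2 * n + 2) z * MM q (katetov q (2 * n + 3) s) k z
        = LL q s (k + n + 1) * Qprod q s (2 * n + 2) z := by
      intro k z
      rw [Qprod_succ, Matrix.mul_assoc, stepB q s hs (2 * n + 2) k z, ← Matrix.mul_assoc,
        ih3 k z, Matrix.mul_assoc]
    have h3 : ∀ k z, Qprod q s (2 * n + 3) z * LL q (katetov q (2 * n + 4) s) k
        = LL q s (k + n + 2) * Qprod q s (2 * n + 3) z := by
      intro k z
      rw [Qprod_succ, Matrix.mul_assoc, stepA q s hs (2 * n + 3) k z, ← Matrix.mul_assoc,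
        h2 (k + 1) z, Matrix.mul_assoc]
      have e : k + 1 + n + 1 = k + n + 2 := by omega
      rw [e]
    have h4 : ∀ k z, Qprod q s (2 * n + 3) z * MM q (katetov q (2 * n + 4) s) k z
        = MM q s (k + n + 2) z * Qprod q s (2 * n + 3) z := by
      intro k z
      rw [Qprod_succ, Matrix.mul_assoc, stepB q s hs (2 * n + 3) k z, ← Matrix.mul_assoc,
        h1 k z, Matrix.mul_assoc]
    have e1 : 2 * (n + 1) = 2 * n + 2 := by omega
    have e2 : 2 * (n + 1) + 1 = 2 * n + 3 := by omega
    have e3 : 2 * (n + 1) + 2 = 2 * n + 4 := by omega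
    rw [e2, e3, e1]
    exact ⟨fun k z => by
        have e : k + (n + 1) + 1 = k + n + 2 := by omega
        rw [e]; exact h1 k z,
      fun k z => by
        have e : k + (n + 1) = k + n + 1 := by omega
        rw [e]; exact h2 k z,
      fun k z => by
        have e : k + (n + 1) + 1 = k + n + 2 := by omega
        rw [e]; exact h3 k z,
      fun k z => by
        have e : k + (n + 1) + 1 = k + n + 2 := by omega
        rw [e]; exact h4 k z⟩

end Steps

end StL

/-- Intertwining relations for the products `𝒬_m`. -/
theorem stmt10 (q : ℕ) (hq : 1 ≤ q) (s : ℕ → Mq q) (hs : IsStieltjesPD q s) (k n : ℕ) (z : ℂ) :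
    Qprod q s (2 * n) z * LL q (katetov q (2 * n + 1) s) k =
        MM q s (k + n + 1) z * Qprod q s (2 * n) z ∧
      Qprod q s (2 * n) z * MM q (katetov q (2 * n + 1) s) k z =
        LL q s (k + n) * Qprod q s (2 * n) z ∧
      Qprod q s (2 * n + 1) z * LL q (katetov q (2 * n + 2) s) k =
        LL q s (k + n + 1) * Qprod q s (2 * n + 1) z ∧
      Qprod q s (2 * n + 1) z * MM q (katetov q (2 * n + 2) s) k z =
        MM q s (k + n + 1) z * Qprod q s (2 * n + 1) z := by
  obtain ⟨h1, h2, h3, h4⟩ := StL.quad q s hs n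
  exact ⟨h1 k z, h2 k z, h3 k z, h4 k z⟩

end
end
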